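/- arXiv:1907.02019 — 4 statements merged into one kernel-verified Lean document; each statement's English description precedes it below -/
import Mathlib

section
/- Let Λ be a Banach space, t₀ ≥ 0, a > 0 and I = [t₀, t₀ + a]. Let S, K : [0, a] → L(Λ) be operator-norm continuous families of bounded linear operators on Λ and set ζ₁ := sup_{t ∈ [0,a]} max(‖S(t)‖, ‖K(t)‖). Let R > 0, B_R := {x ∈ Λ : ‖x‖ ≤ R}, and let Ω := C(I, B_R) be the set of continuous functions I → Λ taking values in B_R, equipped with the sup norm. Let σ : I → I be absolutely continuous with σ′(s) ≥ b > 0 for a.e. s ∈ I. Let φ : I × Λ → Λ be continuous with ‖φ(s, x) − φ(s, y)‖ ≤ δ‖x − y‖ for all s ∈ I and x, y ∈ B_R, and set ζ₂ := sup_{s ∈ I} ‖φ(s, 0)‖. Let g : Ω → Λ satisfy ‖g(μ₁) − g(μ₂)‖ ≤ λ‖μ₁ − μ₂‖_∞ for all μ₁, μ₂ ∈ Ω, and set ζ₃ := sup_{μ ∈ Ω} ‖g(μ)‖. Let ξ₀ ∈ Λ and define the operator F by (Fμ)(t) := S(t − t₀)ξ₀ − S(t − t₀)g(μ) + ∫_{t₀}^{t}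 K(t − s) φ(s, μ(σ(s))) ds for μ ∈ Ω and t ∈ I. If ζ₁(‖ξ₀‖ + ζ₃ + aδR/b + aζ₂) ≤ R, then F maps Ω into Ω, i.e., for every μ ∈ Ω the function Fμ is continuous on I and ‖(Fμ)(t)‖ ≤ R for all t ∈ I. -/
open MeasureTheory Set

/-- Invariance step in the proof of Theorem 1: under condition
`ζ₁(‖ξ₀‖ + ζ₃ + aδR/b + aζ₂) ≤ R`, the solution operator `F` maps
`Ω = C(I, B_R)` into itself. -/
theorem F_maps_Omega_into_Omega
    {Λ : Type*} [NormedAddCommGroup Λ] [NormedSpace ℝ Λ] [CompleteSpace Λ]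
    (t₀ a : ℝ) (ht₀ : 0 ≤ t₀) (ha : 0 < a)
    (S K : ℝ → Λ →L[ℝ] Λ)
    (hS : ContinuousOn S (Set.Icc 0 a)) (hK : ContinuousOn K (Set.Icc 0 a))
    (ζ₁ : ℝ) (hζ₁ : ζ₁ = ⨆ t : Set.Icc (0 : ℝ) a, max ‖S t.1‖ ‖K t.1‖)
    (R : ℝ) (hR : 0 < R)
    (b : ℝ) (hb : 0 < b)
    (σ σ' : ℝ → ℝ)
    (hσmaps : ∀ t ∈ Set.Icc t₀ (t₀ + a), σ t ∈ Set.Icc t₀ (t₀ + a))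
    (hσ'int : IntegrableOn σ' (Set.Icc t₀ (t₀ + a)))
    (hσac : ∀ t ∈ Set.Icc t₀ (t₀ + a), σ t = σ t₀ + ∫ s in t₀..t, σ' s)
    (hσ'b : ∀ᵐ s, s ∈ Set.Icc t₀ (t₀ + a) → b ≤ σ' s)
    (δ : ℝ) (hδ : 0 < δ)
    (φ : ℝ → Λ → Λ)
    (hφcont : ContinuousOn (fun p : ℝ × Λ => φ p.1 p.2)
      (Set.Icc t₀ (t₀ + a) ×ˢ (Set.univ : Set Λ)))
    (hφlip : ∀ s ∈ Set.Icc t₀ (t₀ + a), ∀ x y : Λ, ‖x‖ ≤ R → ‖y‖ ≤ R →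
      ‖φ s x - φ s y‖ ≤ δ * ‖x - y‖)
    (ζ₂ : ℝ) (hζ₂ : ζ₂ = ⨆ s : Set.Icc t₀ (t₀ + a), ‖φ s.1 0‖)
    (g : (ℝ → Λ) → Λ) (lam : ℝ)
    (hg : ∀ μ₁ μ₂ : ℝ → Λ,
      (ContinuousOn μ₁ (Set.Icc t₀ (t₀ + a)) ∧ ∀ t ∈ Set.Icc t₀ (t₀ + a), ‖μ₁ t‖ ≤ R) →
      (ContinuousOn μ₂ (Set.Icc t₀ (t₀ + a)) ∧ ∀ t ∈ Set.Icc t₀ (t₀ + a), ‖μ₂ t‖ ≤ R) →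
      ‖g μ₁ - g μ₂‖ ≤ lam * ⨆ t : Set.Icc t₀ (t₀ + a), ‖μ₁ t.1 - μ₂ t.1‖)
    (ζ₃ : ℝ)
    (hζ₃ : ζ₃ = sSup ((fun μ : ℝ → Λ => ‖g μ‖) ''
      {μ : ℝ → Λ | ContinuousOn μ (Set.Icc t₀ (t₀ + a)) ∧
        ∀ t ∈ Set.Icc t₀ (t₀ + a), ‖μ t‖ ≤ R}))
    (ξ₀ : Λ)
    (F : (ℝ → Λ) → ℝ → Λ)
    (hF : ∀ μ t, F μ t = S (t - t₀) ξ₀ - S (t - t₀) (g μ)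
      + ∫ s in t₀..t, K (t - s) (φ s (μ (σ s))))
    (hmain : ζ₁ * (‖ξ₀‖ + ζ₃ + a * δ * R / b + a * ζ₂) ≤ R) :
    ∀ μ : ℝ → Λ,
      (ContinuousOn μ (Set.Icc t₀ (t₀ + a)) ∧ ∀ t ∈ Set.Icc t₀ (t₀ + a), ‖μ t‖ ≤ R) →
      ContinuousOn (F μ) (Set.Icc t₀ (t₀ + a)) ∧
        ∀ t ∈ Set.Icc t₀ (t₀ + a), ‖F μ t‖ ≤ R := by
  intro μ hμ
  obtain ⟨hμc, hμR⟩ := hμ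
  have haI : t₀ ≤ t₀ + a := by linarith
  have ht₀I : t₀ ∈ Set.Icc t₀ (t₀ + a) := left_mem_Icc.2 haI
  have htaI : t₀ + a ∈ Set.Icc t₀ (t₀ + a) := right_mem_Icc.2 haI
  -- continuity of σ on I
  have hσcont : ContinuousOn σ (Set.Icc t₀ (t₀ + a)) := by
    have hint : IntegrableOn σ' (uIcc t₀ (t₀ + a)) := by rwa [uIcc_of_le haI]
    have hprim := intervalIntegral.continuousOn_primitive_interval (μ := volume) hint
    rw [uIcc_of_le haI] at hprim
    exact (continuousOn_const.add hprim).congr fun t ht => hσac t ht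
  -- continuity of h := fun s => φ s (μ (σ s)) on I
  have hcomp : ContinuousOn (fun s => μ (σ s)) (Set.Icc t₀ (t₀ + a)) :=
    hμc.comp hσcont hσmaps
  have hh : ContinuousOn (fun s => φ s (μ (σ s))) (Set.Icc t₀ (t₀ + a)) := by
    exact hφcont.comp (continuousOn_id.prodMk hcomp) fun s hs => ⟨hs, mem_univ _⟩
  -- extended (clamped) versions of K and of the integrand
  set Kc : ℝ → Λ →L[ℝ] Λ := fun u => K (projIcc 0 a ha.le u) with hKcdef
  have hKc : Continuous Kc :=
    hK.comp_continuous (continuous_subtype_val.comp continuous_projIcc)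
      fun u => (projIcc 0 a ha.le u).2
  set hc : ℝ → Λ := fun s => φ (projIcc t₀ (t₀ + a) haI s)
      (μ (σ (projIcc t₀ (t₀ + a) haI s))) with hhcdef
  have hhc : Continuous hc :=
    hh.comp_continuous (continuous_subtype_val.comp continuous_projIcc)
      fun u => (projIcc t₀ (t₀ + a) haI u).2
  -- continuity of the extended integral term
  have hcontInt : Continuous (fun t => ∫ s in t₀..t, Kc (t - s) (hc s)) := by
    have huncurry : Continuous (fun p : ℝ × ℝ => Kc (p.1 - p.2) (hc p.2)) :=
      (hKc.comp (continuous_fst.sub continuous_snd)).clm_apply (hhc.comp continuous_snd)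
    exact intervalIntegral.continuous_parametric_intervalIntegral_of_continuous
      (f := fun t s => Kc (t - s) (hc s)) huncurry continuous_id
  have hScont : ContinuousOn (fun t => S (t - t₀)) (Set.Icc t₀ (t₀ + a)) := by
    refine hS.comp ((continuous_id.sub continuous_const).continuousOn) fun t ht => ?_
    exact ⟨by linarith [ht.1], by linarith [ht.2]⟩
  -- equality of the integrand on I
  have hEq : ∀ t ∈ Set.Icc t₀ (t₀ + a),
      (∫ s in t₀..t, Kc (t - s) (hc s)) = ∫ s in t₀..t, K (t - s) (φ s (μ (σ s))) := by
    intro t ht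
    refine intervalIntegral.integral_congr fun s hs => ?_
    rw [uIcc_of_le ht.1] at hs
    have hsI : s ∈ Set.Icc t₀ (t₀ + a) := ⟨hs.1, le_trans hs.2 ht.2⟩
    have hts : t - s ∈ Set.Icc (0 : ℝ) a := ⟨by linarith [hs.2], by linarith [hs.1, ht.2]⟩
    simp only [hKcdef, hhcdef, projIcc_of_mem ha.le hts, projIcc_of_mem haI hsI]
  constructor
  · -- continuity of F μ
    refine ContinuousOn.congr
      (f := fun t => S (t - t₀) ξ₀ - S (t - t₀) (g μ) + ∫ s in t₀..t, Kc (t - s) (hc s))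
      ?_ ?_
    · exact ((hScont.clm_apply continuousOn_const).sub
        (hScont.clm_apply continuousOn_const)).add hcontInt.continuousOn
    · intro t ht
      simp only [hF]
      rw [hEq t ht]
  · -- norm bound
    -- bounds for ζ₁
    have hbd1 : BddAbove (Set.range fun u : Set.Icc (0 : ℝ) a => max ‖S u.1‖ ‖K u.1‖) := by
      have hcont : ContinuousOn (fun u => max ‖S u‖ ‖K u‖) (Set.Icc (0 : ℝ) a) :=
        continuous_max.comp_continuousOn (hS.norm.prodMk hK.norm)
      obtain ⟨C, hC⟩ := (isCompact_Icc.image_of_continuousOn hcont).bddAbove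
      exact ⟨C, by rintro x ⟨u, rfl⟩; exact hC ⟨u.1, u.2, rfl⟩⟩
    have hSle : ∀ u ∈ Set.Icc (0 : ℝ) a, ‖S u‖ ≤ ζ₁ := fun u hu => by
      rw [hζ₁]
      exact le_trans (le_max_left _ _) (le_ciSup hbd1 ⟨u, hu⟩)
    have hKle : ∀ u ∈ Set.Icc (0 : ℝ) a, ‖K u‖ ≤ ζ₁ := fun u hu => by
      rw [hζ₁]
      exact le_trans (le_max_right _ _) (le_ciSup hbd1 ⟨u, hu⟩)
    have hζ₁0 : 0 ≤ ζ₁ := le_trans (norm_nonneg _) (hSle 0 (left_mem_Icc.2 ha.le))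
    -- bounds for ζ₂
    have hφ0cont : ContinuousOn (fun s => ‖φ s 0‖) (Set.Icc t₀ (t₀ + a)) :=
      (hφcont.comp (continuousOn_id.prodMk continuousOn_const)
        fun s hs => ⟨hs, mem_univ _⟩).norm
    have hbd2 : BddAbove (Set.range fun s : Set.Icc t₀ (t₀ + a) => ‖φ s.1 0‖) := by
      obtain ⟨C, hC⟩ := (isCompact_Icc.image_of_continuousOn hφ0cont).bddAbove
      exact ⟨C, by rintro x ⟨u, rfl⟩; exact hC ⟨u.1, u.2, rfl⟩⟩
    have hζ₂le : ∀ s ∈ Set.Icc t₀ (t₀ + a), ‖φ s 0‖ ≤ ζ₂ := fun s hs => by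
      rw [hζ₂]; exact le_ciSup hbd2 ⟨s, hs⟩
    have hζ₂0 : 0 ≤ ζ₂ := le_trans (norm_nonneg _) (hζ₂le t₀ ht₀I)
    -- bound for φ
    have hφbound : ∀ s ∈ Set.Icc t₀ (t₀ + a), ∀ x : Λ, ‖x‖ ≤ R →
        ‖φ s x‖ ≤ δ * R + ζ₂ := by
      intro s hs x hx
      have h1 : ‖φ s x - φ s 0‖ ≤ δ * ‖x - 0‖ :=
        hφlip s hs x 0 hx (by simp [hR.le])
      have h2 : ‖φ s x‖ ≤ ‖φ s x - φ s 0‖ + ‖φ s 0‖ := by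
        simpa using norm_add_le (φ s x - φ s 0) (φ s 0)
      have h3 : δ * ‖x - 0‖ ≤ δ * R := by
        rw [sub_zero]; exact mul_le_mul_of_nonneg_left hx hδ.le
      linarith [hζ₂le s hs]
    -- bound for g : ‖g μ‖ ≤ ζ₃
    have h0mem : ContinuousOn (fun _ : ℝ => (0 : Λ)) (Set.Icc t₀ (t₀ + a)) ∧
        ∀ t ∈ Set.Icc t₀ (t₀ + a), ‖(0 : Λ)‖ ≤ R :=
      ⟨continuousOn_const, fun t _ => by simp [hR.le]⟩
    have : Nonempty (Set.Icc t₀ (t₀ + a)) := ⟨⟨t₀, ht₀I⟩⟩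
    have hbd3 : BddAbove ((fun μ : ℝ → Λ => ‖g μ‖) ''
        {μ : ℝ → Λ | ContinuousOn μ (Set.Icc t₀ (t₀ + a)) ∧
          ∀ t ∈ Set.Icc t₀ (t₀ + a), ‖μ t‖ ≤ R}) := by
      refine ⟨‖g (fun _ => 0)‖ + |lam| * R, ?_⟩
      rintro y ⟨ν, hν, rfl⟩
      have hgle := hg ν (fun _ => 0) hν h0mem
      set T : ℝ := ⨆ t : Set.Icc t₀ (t₀ + a), ‖ν t.1 - (0 : Λ)‖ with hT
      have hT0 : 0 ≤ T := Real.iSup_nonneg fun t => norm_nonneg _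
      have hTR : T ≤ R := ciSup_le fun t => by
        simpa using hν.2 t.1 t.2
      have hlamT : lam * T ≤ |lam| * R :=
        le_trans (mul_le_mul_of_nonneg_right (le_abs_self lam) hT0)
          (mul_le_mul_of_nonneg_left hTR (abs_nonneg lam))
      have : ‖g ν‖ ≤ ‖g (fun _ => 0)‖ + ‖g ν - g (fun _ => 0)‖ := by
        simpa using norm_add_le (g (fun _ => 0)) (g ν - g (fun _ => 0))
      linarith
    have hgμ : ‖g μ‖ ≤ ζ₃ := by
      rw [hζ₃]
      exact le_csSup hbd3 ⟨μ, ⟨hμc, hμR⟩, rfl⟩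
    -- b ≤ 1 hence a*δ*R ≤ a*δ*R/b
    have hble : b ≤ 1 := by
      have h1 := hσmaps (t₀ + a) htaI
      have h2 := hσmaps t₀ ht₀I
      have h3 := hσac (t₀ + a) htaI
      have hint : IntervalIntegrable σ' volume t₀ (t₀ + a) := by
        have : IntegrableOn σ' (uIcc t₀ (t₀ + a)) := by rwa [uIcc_of_le haI]
        exact this.intervalIntegrable
      have hmono : b * a ≤ ∫ s in t₀..(t₀ + a), σ' s := by
        have hle : (fun _ : ℝ => b) ≤ᵐ[volume.restrict (Set.Icc t₀ (t₀ + a))] σ' := by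
          filter_upwards [ae_restrict_of_ae hσ'b, ae_restrict_mem measurableSet_Icc]
            with s hs hsmem
          exact hs hsmem
        have h := intervalIntegral.integral_mono_ae_restrict haI
          (intervalIntegrable_const (c := b)) hint hle
        simpa [mul_comm] using h
      have : b * a ≤ a := by
        have : σ (t₀ + a) - σ t₀ ≤ a := by linarith [h1.2, h2.1]
        nlinarith [h3]
      nlinarith
    have hdiv : a * δ * R ≤ a * δ * R / b := by
      rw [le_div_iff₀ hb]
      nlinarith [mul_pos (mul_pos ha hδ) hR]
    -- the integral bound
    intro t ht
    rw [hF]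
    have hIntBound : ‖∫ s in t₀..t, K (t - s) (φ s (μ (σ s)))‖ ≤ ζ₁ * (δ * R + ζ₂) * a := by
      have hC : ∀ s ∈ Set.uIoc t₀ t, ‖K (t - s) (φ s (μ (σ s)))‖ ≤ ζ₁ * (δ * R + ζ₂) := by
        intro s hs
        rw [uIoc_of_le ht.1] at hs
        have hsI : s ∈ Set.Icc t₀ (t₀ + a) := ⟨hs.1.le, le_trans hs.2 ht.2⟩
        have hts : t - s ∈ Set.Icc (0 : ℝ) a := ⟨by linarith [hs.2], by linarith [hs.1, ht.2]⟩
        have h1 : ‖K (t - s) (φ s (μ (σ s)))‖ ≤ ‖K (t - s)‖ * ‖φ s (μ (σ s))‖ :=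
          (K (t - s)).le_opNorm _
        have h2 : ‖φ s (μ (σ s))‖ ≤ δ * R + ζ₂ :=
          hφbound s hsI _ (hμR _ (hσmaps s hsI))
        calc ‖K (t - s) (φ s (μ (σ s)))‖ ≤ ‖K (t - s)‖ * ‖φ s (μ (σ s))‖ := h1
          _ ≤ ζ₁ * (δ * R + ζ₂) :=
            mul_le_mul (hKle _ hts) h2 (norm_nonneg _) hζ₁0
      have := intervalIntegral.norm_integral_le_of_norm_le_const hC
      have habs : |t - t₀| ≤ a := by
        rw [abs_of_nonneg (by linarith [ht.1])]; linarith [ht.2]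
      calc ‖∫ s in t₀..t, K (t - s) (φ s (μ (σ s)))‖
          ≤ ζ₁ * (δ * R + ζ₂) * |t - t₀| := this
        _ ≤ ζ₁ * (δ * R + ζ₂) * a := by
            apply mul_le_mul_of_nonneg_left habs
            positivity
    have htt : t - t₀ ∈ Set.Icc (0 : ℝ) a := ⟨by linarith [ht.1], by linarith [ht.2]⟩
    have hS1 : ‖S (t - t₀) ξ₀‖ ≤ ζ₁ * ‖ξ₀‖ :=
      le_trans ((S (t - t₀)).le_opNorm _)
        (mul_le_mul_of_nonneg_right (hSle _ htt) (norm_nonneg _))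
    have hS2 : ‖S (t - t₀) (g μ)‖ ≤ ζ₁ * ζ₃ :=
      le_trans ((S (t - t₀)).le_opNorm _)
        (mul_le_mul (hSle _ htt) hgμ (norm_nonneg _) hζ₁0)
    have htotal : ‖S (t - t₀) ξ₀ - S (t - t₀) (g μ)
        + ∫ s in t₀..t, K (t - s) (φ s (μ (σ s)))‖
        ≤ ‖S (t - t₀) ξ₀‖ + ‖S (t - t₀) (g μ)‖
          + ‖∫ s in t₀..t, K (t - s) (φ s (μ (σ s)))‖ :=
      le_trans (norm_add_le _ _) (by linarith [norm_sub_le (S (t - t₀) ξ₀) (S (t - t₀) (g μ))])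
    have hfin : ζ₁ * ‖ξ₀‖ + ζ₁ * ζ₃ + ζ₁ * (δ * R + ζ₂) * a ≤ R := by
      nlinarith [mul_le_mul_of_nonneg_left hdiv hζ₁0]
    linarith
end

section
/- Let Λ be a Banach space, t₀ ≥ 0, a > 0 and I = [t₀, t₀ + a]. Let S, K : [0, a] → L(Λ) be operator-norm continuous families of bounded linear operators on Λ and set ζ₁ := sup_{t ∈ [0,a]} max(‖S(t)‖, ‖K(t)‖). Let R > 0, B_R := {x ∈ Λ : ‖x‖ ≤ R}, and Ω := C(I, B_R) with the sup norm. Let σ : I → I be absolutely continuous with σ′(s) ≥ b > 0 for a.e. s ∈ I. Let φ : I × Λ → Λ be continuous with ‖φ(s, x) − φ(s, y)‖ ≤ δ‖x − y‖ for all s ∈ I and x, y ∈ B_R. Let g : Ω → Λ satisfy ‖g(μ₁) − g(μ₂)‖ ≤ λ‖μ₁ − μ₂‖_∞ for all μ₁, μ₂ ∈ Ω. Let ξ₀ ∈ Λ and define (Fμ)(t) := S(t − t₀)ξ₀ − S(t − t₀)g(μ) + ∫_{t₀}^{t} K(t − s) φ(s, μ(σ(s))) ds. Then for all μ₁, μ₂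 ∈ Ω, ‖Fμ₁ − Fμ₂‖_∞ ≤ (ζ₁λ + ζ₁δa/b) ‖μ₁ − μ₂‖_∞. -/
open MeasureTheory Set

/-- Contraction estimate in the proof of Theorem 1: for all `μ₁, μ₂ ∈ Ω = C(I, B_R)`,
`‖Fμ₁ − Fμ₂‖_∞ ≤ (ζ₁λ + ζ₁δa/b) ‖μ₁ − μ₂‖_∞`. -/
theorem F_contraction_estimate
    {Λ : Type*} [NormedAddCommGroup Λ] [NormedSpace ℝ Λ] [CompleteSpace Λ]
    (t₀ a : ℝ) (ht₀ : 0 ≤ t₀) (ha : 0 < a)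
    (S K : ℝ → Λ →L[ℝ] Λ)
    (hS : ContinuousOn S (Set.Icc 0 a)) (hK : ContinuousOn K (Set.Icc 0 a))
    (ζ₁ : ℝ) (hζ₁ : ζ₁ = ⨆ t : Set.Icc (0 : ℝ) a, max ‖S t.1‖ ‖K t.1‖)
    (R : ℝ) (hR : 0 < R)
    (b : ℝ) (hb : 0 < b)
    (σ σ' : ℝ → ℝ)
    (hσmaps : ∀ t ∈ Set.Icc t₀ (t₀ + a), σ t ∈ Set.Icc t₀ (t₀ + a))
    (hσ'int : IntegrableOn σ' (Set.Icc t₀ (t₀ + a)))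
    (hσac : ∀ t ∈ Set.Icc t₀ (t₀ + a), σ t = σ t₀ + ∫ s in t₀..t, σ' s)
    (hσ'b : ∀ᵐ s, s ∈ Set.Icc t₀ (t₀ + a) → b ≤ σ' s)
    (δ : ℝ) (hδ : 0 < δ)
    (φ : ℝ → Λ → Λ)
    (hφcont : ContinuousOn (fun p : ℝ × Λ => φ p.1 p.2)
      (Set.Icc t₀ (t₀ + a) ×ˢ (Set.univ : Set Λ)))
    (hφlip : ∀ s ∈ Set.Icc t₀ (t₀ + a), ∀ x y : Λ, ‖x‖ ≤ R → ‖y‖ ≤ R →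
      ‖φ s x - φ s y‖ ≤ δ * ‖x - y‖)
    (g : (ℝ → Λ) → Λ) (lam : ℝ)
    (hg : ∀ μ₁ μ₂ : ℝ → Λ,
      (ContinuousOn μ₁ (Set.Icc t₀ (t₀ + a)) ∧ ∀ t ∈ Set.Icc t₀ (t₀ + a), ‖μ₁ t‖ ≤ R) →
      (ContinuousOn μ₂ (Set.Icc t₀ (t₀ + a)) ∧ ∀ t ∈ Set.Icc t₀ (t₀ + a), ‖μ₂ t‖ ≤ R) →
      ‖g μ₁ - g μ₂‖ ≤ lam * ⨆ t : Set.Icc t₀ (t₀ + a), ‖μ₁ t.1 - μ₂ t.1‖)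
    (ξ₀ : Λ)
    (F : (ℝ → Λ) → ℝ → Λ)
    (hF : ∀ μ t, F μ t = S (t - t₀) ξ₀ - S (t - t₀) (g μ)
      + ∫ s in t₀..t, K (t - s) (φ s (μ (σ s)))) :
    ∀ μ₁ μ₂ : ℝ → Λ,
      (ContinuousOn μ₁ (Set.Icc t₀ (t₀ + a)) ∧ ∀ t ∈ Set.Icc t₀ (t₀ + a), ‖μ₁ t‖ ≤ R) →
      (ContinuousOn μ₂ (Set.Icc t₀ (t₀ + a)) ∧ ∀ t ∈ Set.Icc t₀ (t₀ + a), ‖μ₂ t‖ ≤ R) →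
      (⨆ t : Set.Icc t₀ (t₀ + a), ‖F μ₁ t.1 - F μ₂ t.1‖) ≤
        (ζ₁ * lam + ζ₁ * δ * a / b) * ⨆ t : Set.Icc t₀ (t₀ + a), ‖μ₁ t.1 - μ₂ t.1‖ := by
  intro μ₁ μ₂ hμ₁ hμ₂
  have hta : t₀ ≤ t₀ + a := by linarith
  have hIne : (Set.Icc t₀ (t₀ + a)).Nonempty := Set.nonempty_Icc.2 hta
  haveI : Nonempty (Set.Icc t₀ (t₀ + a)) := hIne.to_subtype
  haveI : Nonempty (Set.Icc (0:ℝ) a) := (Set.nonempty_Icc.2 ha.le).to_subtype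
  -- b ≤ 1
  have hσint' : IntervalIntegrable σ' volume t₀ (t₀ + a) := by
    rw [intervalIntegrable_iff_integrableOn_Icc_of_le hta]; exact hσ'int
  have hbint : IntervalIntegrable (fun _ : ℝ => b) volume t₀ (t₀ + a) :=
    intervalIntegrable_const
  have hb1 : b ≤ 1 := by
    have h1 : b * a ≤ ∫ s in t₀..(t₀ + a), σ' s := by
      have := intervalIntegral.integral_mono_ae_restrict hta hbint hσint'
        ((ae_restrict_iff' measurableSet_Icc).2 hσ'b)
      simpa [intervalIntegral.integral_const, mul_comm] using this
    have h2 : σ (t₀ + a) = σ t₀ + ∫ s in t₀..(t₀ + a), σ' s :=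
      hσac _ (Set.right_mem_Icc.2 hta)
    have h3 := hσmaps (t₀ + a) (Set.right_mem_Icc.2 hta)
    have h4 := hσmaps t₀ (Set.left_mem_Icc.2 hta)
    have : b * a ≤ a := by
      have := h3.2; have := h4.1
      nlinarith [h1, h2]
    nlinarith
  -- bounds by ζ₁
  obtain ⟨C, hC⟩ := isCompact_Icc.exists_bound_of_continuousOn
    (hS.prodMk hK : ContinuousOn (fun t => (S t, K t)) (Set.Icc 0 a))
  have hbdd : BddAbove (Set.range fun t : Set.Icc (0:ℝ) a => max ‖S t.1‖ ‖K t.1‖) := by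
    refine ⟨C, ?_⟩
    rintro _ ⟨t, rfl⟩
    have := hC t.1 t.2
    rwa [Prod.norm_def] at this
  have hSle : ∀ s ∈ Set.Icc (0:ℝ) a, ‖S s‖ ≤ ζ₁ := fun s hs =>
    le_trans (le_max_left _ _) (hζ₁ ▸ le_ciSup hbdd (⟨s, hs⟩ : Set.Icc (0:ℝ) a))
  have hKle : ∀ s ∈ Set.Icc (0:ℝ) a, ‖K s‖ ≤ ζ₁ := fun s hs =>
    le_trans (le_max_right _ _) (hζ₁ ▸ le_ciSup hbdd (⟨s, hs⟩ : Set.Icc (0:ℝ) a))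
  have hζ0 : 0 ≤ ζ₁ :=
    le_trans (norm_nonneg (S 0)) (hSle 0 (Set.left_mem_Icc.2 ha.le))
  -- M and its properties
  set M : ℝ := ⨆ t : Set.Icc t₀ (t₀ + a), ‖μ₁ t.1 - μ₂ t.1‖ with hM
  obtain ⟨D, hD⟩ := isCompact_Icc.exists_bound_of_continuousOn (hμ₁.1.sub hμ₂.1)
  have hMbdd : BddAbove (Set.range fun t : Set.Icc t₀ (t₀ + a) => ‖μ₁ t.1 - μ₂ t.1‖) := by
    refine ⟨D, ?_⟩; rintro _ ⟨t, rfl⟩; exact hD t.1 t.2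
  have hMle : ∀ t ∈ Set.Icc t₀ (t₀ + a), ‖μ₁ t - μ₂ t‖ ≤ M := fun t ht =>
    le_ciSup hMbdd (⟨t, ht⟩ : Set.Icc t₀ (t₀ + a))
  have hM0 : 0 ≤ M :=
    le_trans (norm_nonneg _) (hMle t₀ (Set.left_mem_Icc.2 hta))
  -- σ continuous on I
  have hσcont : ContinuousOn σ (Set.Icc t₀ (t₀ + a)) := by
    have hprim : ContinuousOn (fun x => σ t₀ + ∫ s in t₀..x, σ' s)
        (Set.Icc t₀ (t₀ + a)) := by
      apply continuousOn_const.add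
      have := intervalIntegral.continuousOn_primitive (μ := volume) (f := σ') hσ'int
      apply this.congr
      intro x hx
      simp only
      rw [intervalIntegral.integral_of_le hx.1]
    exact hprim.congr hσac
  -- pointwise estimate
  refine ciSup_le fun t => ?_
  obtain ⟨t, ht⟩ := t
  have htt : t₀ ≤ t := ht.1
  have hIt : Set.Icc t₀ t ⊆ Set.Icc t₀ (t₀ + a) := Set.Icc_subset_Icc_right ht.2
  -- continuity of the integrands
  have hint : ∀ (μ : ℝ → Λ), ContinuousOn μ (Set.Icc t₀ (t₀ + a)) →
      ContinuousOn (fun s => K (t - s) (φ s (μ (σ s)))) (Set.Icc t₀ t) := by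
    intro μ hμ
    have hmapsub : ∀ s ∈ Set.Icc t₀ t, t - s ∈ Set.Icc (0:ℝ) a := by
      intro s hs
      constructor <;> [linarith [hs.2]; linarith [hs.1, ht.2]]
    have hKc : ContinuousOn (fun s => K (t - s)) (Set.Icc t₀ t) :=
      hK.comp (continuous_const.sub continuous_id).continuousOn hmapsub
    have hμσ : ContinuousOn (fun s => μ (σ s)) (Set.Icc t₀ t) :=
      hμ.comp (hσcont.mono hIt) fun s hs => hσmaps s (hIt hs)
    have hφc : ContinuousOn (fun s => φ s (μ (σ s))) (Set.Icc t₀ t) := by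
      have : ContinuousOn (fun s => ((s, μ (σ s)) : ℝ × Λ)) (Set.Icc t₀ t) :=
        continuousOn_id.prodMk hμσ
      exact hφcont.comp this fun s hs => ⟨hIt hs, Set.mem_univ _⟩
    exact hKc.clm_apply hφc
  have hii₁ : IntervalIntegrable (fun s => K (t - s) (φ s (μ₁ (σ s)))) volume t₀ t :=
    (hint μ₁ hμ₁.1).intervalIntegrable_of_Icc htt
  have hii₂ : IntervalIntegrable (fun s => K (t - s) (φ s (μ₂ (σ s)))) volume t₀ t :=
    (hint μ₂ hμ₂.1).intervalIntegrable_of_Icc htt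
  -- decompose the difference
  have hdiff : F μ₁ t - F μ₂ t =
      S (t - t₀) (g μ₂ - g μ₁)
      + ∫ s in t₀..t, (K (t - s) (φ s (μ₁ (σ s))) - K (t - s) (φ s (μ₂ (σ s)))) := by
    rw [hF, hF, intervalIntegral.integral_sub hii₁ hii₂, map_sub]
    abel
  rw [hdiff]
  have hterm1 : ‖S (t - t₀) (g μ₂ - g μ₁)‖ ≤ ζ₁ * (lam * M) := by
    have h1 : ‖S (t - t₀)‖ ≤ ζ₁ := hSle _ ⟨by linarith, by linarith [ht.2]⟩
    have h2 : ‖g μ₂ - g μ₁‖ ≤ lam * M := by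
      rw [norm_sub_rev]; exact hg μ₁ μ₂ hμ₁ hμ₂
    calc ‖S (t - t₀) (g μ₂ - g μ₁)‖ ≤ ‖S (t - t₀)‖ * ‖g μ₂ - g μ₁‖ :=
          (S (t - t₀)).le_opNorm _
      _ ≤ ζ₁ * (lam * M) := mul_le_mul h1 h2 (norm_nonneg _) hζ0
  have hterm2 : ‖∫ s in t₀..t,
      (K (t - s) (φ s (μ₁ (σ s))) - K (t - s) (φ s (μ₂ (σ s))))‖ ≤ ζ₁ * δ * M * (t - t₀) := by
    have hbound : ∀ s ∈ Set.Ioc t₀ t,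
        ‖K (t - s) (φ s (μ₁ (σ s))) - K (t - s) (φ s (μ₂ (σ s)))‖ ≤ ζ₁ * δ * M := by
      intro s hs
      have hsI : s ∈ Set.Icc t₀ (t₀ + a) := hIt ⟨hs.1.le, hs.2⟩
      have hσs := hσmaps s hsI
      have hKn : ‖K (t - s)‖ ≤ ζ₁ := hKle _ ⟨by linarith [hs.2], by linarith [hs.1, ht.2]⟩
      have hφn : ‖φ s (μ₁ (σ s)) - φ s (μ₂ (σ s))‖ ≤ δ * ‖μ₁ (σ s) - μ₂ (σ s)‖ :=
        hφlip s hsI _ _ (hμ₁.2 _ hσs) (hμ₂.2 _ hσs)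
      calc ‖K (t - s) (φ s (μ₁ (σ s))) - K (t - s) (φ s (μ₂ (σ s)))‖
          = ‖K (t - s) (φ s (μ₁ (σ s)) - φ s (μ₂ (σ s)))‖ := by rw [map_sub]
        _ ≤ ‖K (t - s)‖ * ‖φ s (μ₁ (σ s)) - φ s (μ₂ (σ s))‖ := (K (t - s)).le_opNorm _
        _ ≤ ζ₁ * (δ * ‖μ₁ (σ s) - μ₂ (σ s)‖) :=
            mul_le_mul hKn hφn (norm_nonneg _) hζ0
        _ ≤ ζ₁ * (δ * M) :=
            mul_le_mul_of_nonneg_left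
              (mul_le_mul_of_nonneg_left (hMle _ hσs) hδ.le) hζ0
        _ = ζ₁ * δ * M := by ring
    have := intervalIntegral.norm_integral_le_of_norm_le_const
      (C := ζ₁ * δ * M) (by
        intro x hx
        rw [Set.uIoc_of_le htt] at hx
        exact hbound x hx)
    calc ‖∫ s in t₀..t, (K (t - s) (φ s (μ₁ (σ s))) - K (t - s) (φ s (μ₂ (σ s))))‖
        ≤ ζ₁ * δ * M * |t - t₀| := this
      _ = ζ₁ * δ * M * (t - t₀) := by rw [abs_of_nonneg (by linarith)]
  calc ‖S (t - t₀) (g μ₂ - g μ₁)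
        + ∫ s in t₀..t, (K (t - s) (φ s (μ₁ (σ s))) - K (t - s) (φ s (μ₂ (σ s))))‖
      ≤ ζ₁ * (lam * M) + ζ₁ * δ * M * (t - t₀) :=
        le_trans (norm_add_le _ _) (add_le_add hterm1 hterm2)
    _ ≤ (ζ₁ * lam + ζ₁ * δ * a / b) * M := by
        have h1 : ζ₁ * δ * M * (t - t₀) ≤ ζ₁ * δ * M * a := by
          have h : t - t₀ ≤ a := by linarith [ht.2]
          exact mul_le_mul_of_nonneg_left h (by positivity)
        have h2 : ζ₁ * δ * M * a ≤ ζ₁ * δ * a / b * M := by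
          rw [div_mul_eq_mul_div, le_div_iff₀ hb]
          nlinarith [mul_nonneg (sub_nonneg.2 hb1)
            (by positivity : (0:ℝ) ≤ ζ₁ * δ * M * a)]
        nlinarith [h1, h2]
end

section
/- Let Λ be a Banach space, t₀ ≥ 0, a > 0 and I = [t₀, t₀ + a]. Let S, K : [0, a] → L(Λ) be operator-norm continuous families of bounded linear operators on Λ and set ζ₁ := sup_{t ∈ [0,a]} max(‖S(t)‖, ‖K(t)‖). Let R > 0, B_R := {x ∈ Λ : ‖x‖ ≤ R}, and Ω := C(I, B_R) with the sup norm. Let σ : I → I be absolutely continuous with σ′(s) ≥ b > 0 for a.e. s ∈ I. Let φ : I × Λ → Λ be continuous with ‖φ(s, x) − φ(s, y)‖ ≤ δ‖x − y‖ for all s ∈ I and x, y ∈ B_R, and set ζ₂ := sup_{s ∈ I} ‖φ(s, 0)‖. Let g : Ω → Λ satisfy ‖g(μ₁) − g(μ₂)‖ ≤ λ‖μ₁ − μ₂‖_∞ for all μ₁, μ₂ ∈ Ω, with ζ₃ := sup_{μ ∈ Ω} ‖g(μ)‖. Let ξ₀ ∈ Λ. Assume ζ₁(‖ξ₀‖ +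 ζ₃ + aδR/b + aζ₂) ≤ R and ζ₁λ + ζ₁δa/b < 1. Then there exists a unique ξ ∈ Ω such that ξ(t) = S(t − t₀)ξ₀ − S(t − t₀)g(ξ) + ∫_{t₀}^{t} K(t − s) φ(s, ξ(σ(s))) ds for every t ∈ I. -/
open MeasureTheory Set

set_option maxHeartbeats 2000000

/-- Theorem 1 of the paper: under the invariance condition
`ζ₁(‖ξ₀‖ + ζ₃ + aδR/b + aζ₂) ≤ R` and the contraction condition `ζ₁λ + ζ₁δa/b < 1`,
there exists a unique mild solution `ξ ∈ Ω = C(I, B_R)`, i.e. a unique `ξ` satisfying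
`ξ(t) = S(t−t₀)ξ₀ − S(t−t₀)g(ξ) + ∫_{t₀}^{t} K(t−s) φ(s, ξ(σ(s))) ds` on `I`. -/
theorem existence_uniqueness_mild_solution
    {Λ : Type*} [NormedAddCommGroup Λ] [NormedSpace ℝ Λ] [CompleteSpace Λ]
    (t₀ a : ℝ) (ht₀ : 0 ≤ t₀) (ha : 0 < a)
    (S K : ℝ → Λ →L[ℝ] Λ)
    (hS : ContinuousOn S (Set.Icc 0 a)) (hK : ContinuousOn K (Set.Icc 0 a))
    (ζ₁ : ℝ) (hζ₁ : ζ₁ = ⨆ t : Set.Icc (0 : ℝ) a, max ‖S t.1‖ ‖K t.1‖)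
    (R : ℝ) (hR : 0 < R)
    (b : ℝ) (hb : 0 < b)
    (σ σ' : ℝ → ℝ)
    (hσmaps : ∀ t ∈ Set.Icc t₀ (t₀ + a), σ t ∈ Set.Icc t₀ (t₀ + a))
    (hσ'int : IntegrableOn σ' (Set.Icc t₀ (t₀ + a)))
    (hσac : ∀ t ∈ Set.Icc t₀ (t₀ + a), σ t = σ t₀ + ∫ s in t₀..t, σ' s)
    (hσ'b : ∀ᵐ s, s ∈ Set.Icc t₀ (t₀ + a) → b ≤ σ' s)
    (δ : ℝ) (hδ : 0 < δ)
    (φ : ℝ → Λ → Λ)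
    (hφcont : ContinuousOn (fun p : ℝ × Λ => φ p.1 p.2)
      (Set.Icc t₀ (t₀ + a) ×ˢ (Set.univ : Set Λ)))
    (hφlip : ∀ s ∈ Set.Icc t₀ (t₀ + a), ∀ x y : Λ, ‖x‖ ≤ R → ‖y‖ ≤ R →
      ‖φ s x - φ s y‖ ≤ δ * ‖x - y‖)
    (ζ₂ : ℝ) (hζ₂ : ζ₂ = ⨆ s : Set.Icc t₀ (t₀ + a), ‖φ s.1 0‖)
    (g : (ℝ → Λ) → Λ) (lam : ℝ)
    (hg : ∀ μ₁ μ₂ : ℝ → Λ,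
      (ContinuousOn μ₁ (Set.Icc t₀ (t₀ + a)) ∧ ∀ t ∈ Set.Icc t₀ (t₀ + a), ‖μ₁ t‖ ≤ R) →
      (ContinuousOn μ₂ (Set.Icc t₀ (t₀ + a)) ∧ ∀ t ∈ Set.Icc t₀ (t₀ + a), ‖μ₂ t‖ ≤ R) →
      ‖g μ₁ - g μ₂‖ ≤ lam * ⨆ t : Set.Icc t₀ (t₀ + a), ‖μ₁ t.1 - μ₂ t.1‖)
    (ζ₃ : ℝ)
    (hζ₃ : ζ₃ = sSup ((fun μ : ℝ → Λ => ‖g μ‖) ''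
      {μ : ℝ → Λ | ContinuousOn μ (Set.Icc t₀ (t₀ + a)) ∧
        ∀ t ∈ Set.Icc t₀ (t₀ + a), ‖μ t‖ ≤ R}))
    (ξ₀ : Λ)
    (hmain : ζ₁ * (‖ξ₀‖ + ζ₃ + a * δ * R / b + a * ζ₂) ≤ R)
    (hcontr : ζ₁ * lam + ζ₁ * δ * a / b < 1) :
    ∃ ξ : ℝ → Λ,
      (ContinuousOn ξ (Set.Icc t₀ (t₀ + a)) ∧ ∀ t ∈ Set.Icc t₀ (t₀ + a), ‖ξ t‖ ≤ R) ∧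
      (∀ t ∈ Set.Icc t₀ (t₀ + a), ξ t = S (t - t₀) ξ₀ - S (t - t₀) (g ξ)
        + ∫ s in t₀..t, K (t - s) (φ s (ξ (σ s)))) ∧
      (∀ ξ' : ℝ → Λ,
        (ContinuousOn ξ' (Set.Icc t₀ (t₀ + a)) ∧ ∀ t ∈ Set.Icc t₀ (t₀ + a), ‖ξ' t‖ ≤ R) →
        (∀ t ∈ Set.Icc t₀ (t₀ + a), ξ' t = S (t - t₀) ξ₀ - S (t - t₀) (g ξ')
          + ∫ s in t₀..t, K (t - s) (φ s (ξ' (σ s)))) →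
        ∀ t ∈ Set.Icc t₀ (t₀ + a), ξ' t = ξ t) := by
  classical
  -- trivial case: Λ = {0}
  by_cases htriv : ∀ x : Λ, x = 0
  · refine ⟨fun _ => 0, ⟨continuousOn_const, fun t _ => by simp [hR.le]⟩,
      fun t _ => (htriv _).symm, fun ξ' _ _ t _ => by rw [htriv (ξ' t)]⟩
  push_neg at htriv
  obtain ⟨v₀, hv₀⟩ := htriv
  have ht01 : t₀ ≤ t₀ + a := by linarith
  have hIne : (Icc t₀ (t₀ + a)).Nonempty := ⟨t₀, by constructor <;> linarith⟩
  haveI : Nonempty ↥(Icc t₀ (t₀ + a)) := Set.Nonempty.to_subtype hIne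
  haveI : Nonempty ↥(Icc (0 : ℝ) a) := Set.Nonempty.to_subtype ⟨0, le_refl _, ha.le⟩
  -- bounds from ζ₁
  have hmaxcont : ContinuousOn (fun t => max ‖S t‖ ‖K t‖) (Icc (0:ℝ) a) := fun x hx => (hS.norm x hx).max (hK.norm x hx)
  have hbdd1 : BddAbove (Set.range fun t : Icc (0:ℝ) a => max ‖S t.1‖ ‖K t.1‖) := by
    rw [show (Set.range fun t : Icc (0:ℝ) a => max ‖S t.1‖ ‖K t.1‖)
        = (fun t => max ‖S t‖ ‖K t‖) '' Icc (0:ℝ) a from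
        (Set.image_eq_range (fun t => max ‖S t‖ ‖K t‖) (Icc (0:ℝ) a)).symm]
    exact (isCompact_Icc.image_of_continuousOn hmaxcont).bddAbove
  have hSle : ∀ u ∈ Icc (0:ℝ) a, ‖S u‖ ≤ ζ₁ := fun u hu => by
    rw [hζ₁]; exact le_trans (le_max_left _ _) (le_ciSup hbdd1 ⟨u, hu⟩)
  have hKle : ∀ u ∈ Icc (0:ℝ) a, ‖K u‖ ≤ ζ₁ := fun u hu => by
    rw [hζ₁]; exact le_trans (le_max_right _ _) (le_ciSup hbdd1 ⟨u, hu⟩)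
  have hζ₁0 : 0 ≤ ζ₁ := le_trans (norm_nonneg (S 0)) (hSle 0 ⟨le_refl _, ha.le⟩)
  -- bounds from ζ₂
  have hφ0cont : ContinuousOn (fun s => φ s 0) (Icc t₀ (t₀ + a)) := by
    have : ContinuousOn ((fun p : ℝ × Λ => φ p.1 p.2) ∘ fun s => (s, (0:Λ)))
        (Icc t₀ (t₀ + a)) :=
      hφcont.comp (continuous_id.prodMk continuous_const).continuousOn
        (fun s hs => ⟨hs, mem_univ _⟩)
    exact this
  have hbdd2 : BddAbove (Set.range fun s : Icc t₀ (t₀ + a) => ‖φ s.1 0‖) := by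
    rw [show (Set.range fun s : Icc t₀ (t₀ + a) => ‖φ s.1 0‖)
        = (fun s => ‖φ s 0‖) '' Icc t₀ (t₀ + a) from
        (Set.image_eq_range (fun s => ‖φ s 0‖) (Icc t₀ (t₀ + a))).symm]
    exact (isCompact_Icc.image_of_continuousOn hφ0cont.norm).bddAbove
  have hφ0le : ∀ s ∈ Icc t₀ (t₀ + a), ‖φ s 0‖ ≤ ζ₂ := fun s hs => by
    rw [hζ₂]; exact le_ciSup hbdd2 ⟨s, hs⟩
  have hζ₂0 : 0 ≤ ζ₂ := le_trans (norm_nonneg _) (hφ0le t₀ ⟨le_refl _, by linarith⟩)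
  have hφbound : ∀ s ∈ Icc t₀ (t₀ + a), ∀ x : Λ, ‖x‖ ≤ R → ‖φ s x‖ ≤ δ * R + ζ₂ := by
    intro s hs x hx
    have h1 := hφlip s hs x 0 hx (by simp [hR.le])
    have h2 := hφ0le s hs
    have h3 : ‖φ s x‖ ≤ ‖φ s x - φ s 0‖ + ‖φ s 0‖ := by simpa using norm_add_le (φ s x - φ s 0) (φ s 0)
    rw [sub_zero] at h1
    nlinarith [norm_nonneg x]
  -- σ is continuous on I
  have hσcont : ContinuousOn σ (Icc t₀ (t₀ + a)) := by
    have h1 : ContinuousOn (fun t => σ t₀ + ∫ s in t₀..t, σ' s) (Icc t₀ (t₀ + a)) := by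
      refine continuousOn_const.add ?_
      have := intervalIntegral.continuousOn_primitive_interval
        (a := t₀) (b := t₀ + a) (f := σ') (μ := volume) (by rwa [uIcc_of_le ht01])
      rwa [uIcc_of_le ht01] at this
    exact h1.congr fun t ht => hσac t ht
  -- b ≤ 1
  have hb1 : b ≤ 1 := by
    have hInt : IntegrableOn σ' (Ioc t₀ (t₀ + a)) := hσ'int.mono_set Ioc_subset_Icc_self
    have hae : ∀ᵐ s ∂(volume.restrict (Ioc t₀ (t₀ + a))), (fun _ => b) s ≤ σ' s := by
      rw [ae_restrict_iff' measurableSet_Ioc]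
      filter_upwards [hσ'b] with s hs hs' using hs (Ioc_subset_Icc_self hs')
    have hmono : ∫ s in Ioc t₀ (t₀ + a), (b : ℝ) ≤ ∫ s in Ioc t₀ (t₀ + a), σ' s :=
      setIntegral_mono_ae_restrict
        (integrableOn_const (by rw [Real.volume_Ioc]; exact ENNReal.ofReal_ne_top))
        hInt hae
    have hconst : ∫ s in Ioc t₀ (t₀ + a), (b : ℝ) = a * b := by
      rw [setIntegral_const, measureReal_def, Real.volume_Ioc]
      simp only [smul_eq_mul]
      rw [ENNReal.toReal_ofReal (by linarith)]
      ring_nf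
    have hσa := hσac (t₀ + a) ⟨ht01, le_refl _⟩
    have hival : ∫ s in t₀..(t₀ + a), σ' s = ∫ s in Ioc t₀ (t₀ + a), σ' s :=
      intervalIntegral.integral_of_le ht01
    have h1 := hσmaps (t₀ + a) ⟨ht01, le_refl _⟩
    have h2 := hσmaps t₀ ⟨le_refl _, ht01⟩
    have h2' : σ t₀ = σ t₀ + ∫ s in t₀..t₀, σ' s := by simp
    have : a * b ≤ a := by
      have : σ (t₀ + a) - σ t₀ = ∫ s in Ioc t₀ (t₀ + a), σ' s := by
        rw [hσa, hival]; ring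
      rw [hconst] at hmono
      obtain ⟨hl1, hr1⟩ := h1; obtain ⟨hl2, hr2⟩ := h2
      linarith
    nlinarith
  -- globalized continuous versions via projections
  have hπmem : ∀ s : ℝ, ((projIcc t₀ (t₀ + a) ht01 s : ℝ)) ∈ Icc t₀ (t₀ + a) :=
    fun s => (projIcc t₀ (t₀ + a) ht01 s).2
  have hπeq : ∀ s ∈ Icc t₀ (t₀ + a), ((projIcc t₀ (t₀ + a) ht01 s : ℝ)) = s :=
    fun s hs => by rw [projIcc_of_mem ht01 hs]
  have hπ0mem : ∀ u : ℝ, ((projIcc (0:ℝ) a ha.le u : ℝ)) ∈ Icc (0:ℝ) a :=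
    fun u => (projIcc (0:ℝ) a ha.le u).2
  have hπ0eq : ∀ u ∈ Icc (0:ℝ) a, ((projIcc (0:ℝ) a ha.le u : ℝ)) = u :=
    fun u hu => by rw [projIcc_of_mem ha.le hu]
  set Kc : ℝ → Λ →L[ℝ] Λ := fun u => K ((projIcc (0:ℝ) a ha.le u : ℝ)) with hKcdef
  set Sc : ℝ → Λ →L[ℝ] Λ := fun u => S ((projIcc (0:ℝ) a ha.le u : ℝ)) with hScdef
  have hKcc : Continuous Kc :=
    hK.comp_continuous (continuous_subtype_val.comp continuous_projIcc) hπ0mem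
  have hScc : Continuous Sc :=
    hS.comp_continuous (continuous_subtype_val.comp continuous_projIcc) hπ0mem
  have hKcle : ∀ u, ‖Kc u‖ ≤ ζ₁ := fun u => hKle _ (hπ0mem u)
  have hScle : ∀ u, ‖Sc u‖ ≤ ζ₁ := fun u => hSle _ (hπ0mem u)
  have hKceq : ∀ u ∈ Icc (0:ℝ) a, Kc u = K u := fun u hu => by
    rw [hKcdef]; simp only []; rw [hπ0eq u hu]
  have hSceq : ∀ u ∈ Icc (0:ℝ) a, Sc u = S u := fun u hu => by
    rw [hScdef]; simp only []; rw [hπ0eq u hu]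
  set φc : ℝ → Λ → Λ := fun s x => φ ((projIcc t₀ (t₀ + a) ht01 s : ℝ)) x with hφcdef
  have hφcc : Continuous (fun p : ℝ × Λ => φc p.1 p.2) := by
    have h : Continuous ((fun p : ℝ × Λ => φ p.1 p.2) ∘
        (fun p : ℝ × Λ => (((projIcc t₀ (t₀ + a) ht01 p.1 : ℝ)), p.2))) :=
      hφcont.comp_continuous
        ((continuous_subtype_val.comp (continuous_projIcc.comp continuous_fst)).prodMk
          continuous_snd)
        (fun p => ⟨hπmem p.1, mem_univ _⟩)
    exact h
  set σc : ℝ → ℝ := fun s => σ ((projIcc t₀ (t₀ + a) ht01 s : ℝ)) with hσcdef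
  have hσcc : Continuous σc :=
    hσcont.comp_continuous (continuous_subtype_val.comp continuous_projIcc) hπmem
  have hσcmem : ∀ s, σc s ∈ Icc t₀ (t₀ + a) := fun s => hσmaps _ (hπmem s)
  have hσceq : ∀ s ∈ Icc t₀ (t₀ + a), σc s = σ s := fun s hs => by
    rw [hσcdef]; simp only []; rw [hπeq s hs]
  -- the complete metric space Ω
  set Ω : Set C(↥(Icc t₀ (t₀ + a)), Λ) := {f | ∀ t, ‖f t‖ ≤ R} with hΩdef
  have hΩclosed : IsClosed Ω := by
    have : Ω = ⋂ t, {f : C(↥(Icc t₀ (t₀ + a)), Λ) | ‖f t‖ ≤ R} := by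
      ext f; simp [hΩdef, Set.mem_iInter]
    rw [this]
    exact isClosed_iInter fun t =>
      isClosed_le (continuous_eval_const t).norm continuous_const
  haveI : CompleteSpace ↥Ω := hΩclosed.completeSpace_coe
  haveI : Nonempty ↥Ω := ⟨⟨0, fun t => by simp [hR.le]⟩⟩
  -- extension of elements of Ω to ℝ
  set ext : C(↥(Icc t₀ (t₀ + a)), Λ) → ℝ → Λ :=
    fun f s => f (projIcc t₀ (t₀ + a) ht01 s) with hextdef
  have hextcont : ∀ f : C(↥(Icc t₀ (t₀ + a)), Λ), Continuous (ext f) :=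
    fun f => f.continuous.comp continuous_projIcc
  have hexteq : ∀ f : C(↥(Icc t₀ (t₀ + a)), Λ), ∀ s, ∀ hs : s ∈ Icc t₀ (t₀ + a),
      ext f s = f ⟨s, hs⟩ := fun f s hs => by
    rw [hextdef]; simp only []; rw [projIcc_of_mem ht01 hs]
  have hextP : ∀ f : ↥Ω, ContinuousOn (ext f.1) (Icc t₀ (t₀ + a)) ∧
      ∀ t ∈ Icc t₀ (t₀ + a), ‖ext f.1 t‖ ≤ R :=
    fun f => ⟨(hextcont f.1).continuousOn, fun t _ => f.2 _⟩
  have hextmem : ∀ f : ↥Ω, ∀ s, ‖ext f.1 s‖ ≤ R := fun f s => f.2 _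
  -- lam ≥ 0
  have hlam0 : 0 ≤ lam := by
    set v : Λ := (R / ‖v₀‖) • v₀ with hvdef
    have hv₀n : (0:ℝ) < ‖v₀‖ := norm_pos_iff.2 hv₀
    have hvnorm : ‖v‖ = R := by
      rw [hvdef, norm_smul, Real.norm_eq_abs, abs_of_pos (by positivity),
        div_mul_cancel₀ _ (ne_of_gt hv₀n)]
    have h1 := hg (fun _ => v) (fun _ => 0)
      ⟨continuousOn_const, fun t _ => le_of_eq hvnorm⟩
      ⟨continuousOn_const, fun t _ => by simp [hR.le]⟩
    have h2 : (⨆ t : Icc t₀ (t₀ + a), ‖(fun _ : ℝ => v) t.1 - (fun _ : ℝ => (0:Λ)) t.1‖) = R := by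
      simp only [sub_zero]
      rw [ciSup_const, hvnorm]
    rw [h2] at h1
    have h3 : (0:ℝ) ≤ lam * R := le_trans (norm_nonneg _) h1
    nlinarith
  -- bounds from ζ₃
  have hgbdd : BddAbove ((fun μ : ℝ → Λ => ‖g μ‖) ''
      {μ : ℝ → Λ | ContinuousOn μ (Icc t₀ (t₀ + a)) ∧
        ∀ t ∈ Icc t₀ (t₀ + a), ‖μ t‖ ≤ R}) := by
    refine ⟨‖g (fun _ => 0)‖ + lam * (2 * R), ?_⟩
    rintro y ⟨μ, hμ, rfl⟩
    have h := hg μ (fun _ => 0) hμ ⟨continuousOn_const, fun t _ => by simp [hR.le]⟩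
    have hs : (⨆ t : Icc t₀ (t₀ + a), ‖μ t.1 - (fun _ : ℝ => (0:Λ)) t.1‖) ≤ 2 * R :=
      ciSup_le fun t => by
        have := hμ.2 t.1 t.2; simp only [sub_zero]; linarith
    have h4 : ‖g μ‖ ≤ ‖g μ - g (fun _ => 0)‖ + ‖g (fun _ => 0)‖ := by
      simpa using norm_add_le (g μ - g (fun _ => 0)) (g (fun _ => 0))
    have h5 : lam * (⨆ t : Icc t₀ (t₀ + a), ‖μ t.1 - (fun _ : ℝ => (0:Λ)) t.1‖)
        ≤ lam * (2 * R) := mul_le_mul_of_nonneg_left hs hlam0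
    simp only []
    linarith
  have hgle : ∀ μ : ℝ → Λ, (ContinuousOn μ (Icc t₀ (t₀ + a)) ∧
      ∀ t ∈ Icc t₀ (t₀ + a), ‖μ t‖ ≤ R) → ‖g μ‖ ≤ ζ₃ := fun μ hμ => by
    rw [hζ₃]; exact le_csSup hgbdd ⟨μ, hμ, rfl⟩
  have hζ₃0 : 0 ≤ ζ₃ :=
    le_trans (norm_nonneg _) (hgle (fun _ => 0)
      ⟨continuousOn_const, fun t _ => by simp [hR.le]⟩)
  -- g only depends on values on I
  have hgcongr : ∀ μ₁ μ₂ : ℝ → Λ,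
      (ContinuousOn μ₁ (Icc t₀ (t₀ + a)) ∧ ∀ t ∈ Icc t₀ (t₀ + a), ‖μ₁ t‖ ≤ R) →
      (ContinuousOn μ₂ (Icc t₀ (t₀ + a)) ∧ ∀ t ∈ Icc t₀ (t₀ + a), ‖μ₂ t‖ ≤ R) →
      (∀ t ∈ Icc t₀ (t₀ + a), μ₁ t = μ₂ t) → g μ₁ = g μ₂ := by
    intro μ₁ μ₂ h1 h2 heq
    have h := hg μ₁ μ₂ h1 h2
    have h0 : (⨆ t : Icc t₀ (t₀ + a), ‖μ₁ t.1 - μ₂ t.1‖) = 0 := by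
      have : ∀ t : Icc t₀ (t₀ + a), ‖μ₁ t.1 - μ₂ t.1‖ = (0:ℝ) := fun t => by
        rw [heq t.1 t.2, sub_self, norm_zero]
      rw [iSup_congr this, ciSup_const]
    rw [h0, mul_zero] at h
    exact sub_eq_zero.1 (norm_le_zero_iff.1 h)
  -- the composite map ψ f s = φc s (ext f (σc s))
  have hψcont : ∀ f : ↥Ω, Continuous (fun s => φc s (ext f.1 (σc s))) := fun f =>
    hφcc.comp (continuous_id.prodMk ((hextcont f.1).comp hσcc))
  have hψbound : ∀ f : ↥Ω, ∀ s, ‖φc s (ext f.1 (σc s))‖ ≤ δ * R + ζ₂ := fun f s =>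
    hφbound _ (hπmem s) _ (hextmem f _)
  have hψdist : ∀ f₁ f₂ : ↥Ω, ∀ s,
      ‖φc s (ext f₁.1 (σc s)) - φc s (ext f₂.1 (σc s))‖ ≤ δ * dist f₁ f₂ := by
    intro f₁ f₂ s
    have h1 := hφlip _ (hπmem s) (ext f₁.1 (σc s)) (ext f₂.1 (σc s))
      (hextmem f₁ _) (hextmem f₂ _)
    have h2 : ‖ext f₁.1 (σc s) - ext f₂.1 (σc s)‖ ≤ dist f₁ f₂ := by
      rw [hextdef]
      simp only []
      rw [← dist_eq_norm]
      calc dist (f₁.1 (projIcc t₀ (t₀+a) ht01 (σc s))) (f₂.1 (projIcc t₀ (t₀+a) ht01 (σc s)))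
          ≤ dist f₁.1 f₂.1 := ContinuousMap.dist_apply_le_dist _
        _ = dist f₁ f₂ := (Subtype.dist_eq f₁ f₂).symm
    calc ‖φc s (ext f₁.1 (σc s)) - φc s (ext f₂.1 (σc s))‖
        ≤ δ * ‖ext f₁.1 (σc s) - ext f₂.1 (σc s)‖ := h1
      _ ≤ δ * dist f₁ f₂ := mul_le_mul_of_nonneg_left h2 hδ.le
  -- the integral part
  set Fint : ↥Ω → ℝ → Λ := fun f t => ∫ s in t₀..t, Kc (t - s) (φc s (ext f.1 (σc s)))
    with hFintdef
  have hFcont : ∀ f : ↥Ω, Continuous (Fint f) := by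
    intro f
    exact intervalIntegral.continuous_parametric_intervalIntegral_of_continuous
      (f := fun t s => Kc (t - s) (φc s (ext f.1 (σc s)))) (μ := volume)
      (((hKcc.comp (continuous_fst.sub continuous_snd)).clm_apply
        ((hψcont f).comp continuous_snd)))
      continuous_id
  have hFbound : ∀ f : ↥Ω, ∀ t ∈ Icc t₀ (t₀ + a), ‖Fint f t‖ ≤ a * (ζ₁ * (δ * R + ζ₂)) := by
    intro f t ht
    have h1 : ‖Fint f t‖ ≤ ζ₁ * (δ * R + ζ₂) * |t - t₀| := by
      rw [hFintdef]
      refine intervalIntegral.norm_integral_le_of_norm_le_const ?_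
      intro s _
      calc ‖Kc (t - s) (φc s (ext f.1 (σc s)))‖
          ≤ ‖Kc (t - s)‖ * ‖φc s (ext f.1 (σc s))‖ := ContinuousLinearMap.le_opNorm _ _
        _ ≤ ζ₁ * (δ * R + ζ₂) := by
            have hb1 := hKcle (t - s)
            have hb2 := hψbound f s
            have := norm_nonneg (Kc (t - s))
            have := norm_nonneg (φc s (ext f.1 (σc s)))
            nlinarith
    have h2 : |t - t₀| ≤ a := by
      rw [abs_of_nonneg (by linarith [ht.1])]; linarith [ht.2]
    calc ‖Fint f t‖ ≤ ζ₁ * (δ * R + ζ₂) * |t - t₀| := h1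
      _ ≤ a * (ζ₁ * (δ * R + ζ₂)) := by
          have hp : (0:ℝ) ≤ ζ₁ * (δ * R + ζ₂) := by positivity
          nlinarith
  have hFdist : ∀ f₁ f₂ : ↥Ω, ∀ t ∈ Icc t₀ (t₀ + a),
      ‖Fint f₁ t - Fint f₂ t‖ ≤ ζ₁ * δ * a * dist f₁ f₂ := by
    intro f₁ f₂ t ht
    have hint1 : IntervalIntegrable (fun s => Kc (t - s) (φc s (ext f₁.1 (σc s))))
        volume t₀ t :=
      (((hKcc.comp (continuous_const.sub continuous_id)).clm_apply (hψcont f₁))).intervalIntegrable _ _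
    have hint2 : IntervalIntegrable (fun s => Kc (t - s) (φc s (ext f₂.1 (σc s))))
        volume t₀ t :=
      (((hKcc.comp (continuous_const.sub continuous_id)).clm_apply (hψcont f₂))).intervalIntegrable _ _
    have hsub : Fint f₁ t - Fint f₂ t = ∫ s in t₀..t,
        (Kc (t - s) (φc s (ext f₁.1 (σc s))) - Kc (t - s) (φc s (ext f₂.1 (σc s)))) := by
      rw [hFintdef]; simp only []
      rw [intervalIntegral.integral_sub hint1 hint2]
    have h1 : ‖Fint f₁ t - Fint f₂ t‖ ≤ ζ₁ * (δ * dist f₁ f₂) * |t - t₀| := by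
      rw [hsub]
      refine intervalIntegral.norm_integral_le_of_norm_le_const ?_
      intro s _
      rw [← ContinuousLinearMap.map_sub]
      calc ‖Kc (t - s) (φc s (ext f₁.1 (σc s)) - φc s (ext f₂.1 (σc s)))‖
          ≤ ‖Kc (t - s)‖ * ‖φc s (ext f₁.1 (σc s)) - φc s (ext f₂.1 (σc s))‖ :=
            ContinuousLinearMap.le_opNorm _ _
        _ ≤ ζ₁ * (δ * dist f₁ f₂) := by
            have hb1 := hKcle (t - s)
            have hb2 := hψdist f₁ f₂ s
            have := norm_nonneg (Kc (t - s))
            have h0 : (0:ℝ) ≤ δ * dist f₁ f₂ := by positivity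
            nlinarith [norm_nonneg (φc s (ext f₁.1 (σc s)) - φc s (ext f₂.1 (σc s)))]
    have h2 : |t - t₀| ≤ a := by
      rw [abs_of_nonneg (by linarith [ht.1])]; linarith [ht.2]
    have hp : (0:ℝ) ≤ ζ₁ * (δ * dist f₁ f₂) := by positivity
    calc ‖Fint f₁ t - Fint f₂ t‖ ≤ ζ₁ * (δ * dist f₁ f₂) * |t - t₀| := h1
      _ ≤ ζ₁ * δ * a * dist f₁ f₂ := by nlinarith
  -- the full map on ℝ
  set TR : ↥Ω → ℝ → Λ := fun f t =>
    Sc (t - t₀) ξ₀ - Sc (t - t₀) (g (ext f.1)) + Fint f t with hTRdef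
  have hTRcont : ∀ f : ↥Ω, Continuous (TR f) := by
    intro f
    refine Continuous.add (Continuous.sub ?_ ?_) (hFcont f)
    · exact (hScc.comp (continuous_id.sub continuous_const)).clm_apply continuous_const
    · exact (hScc.comp (continuous_id.sub continuous_const)).clm_apply continuous_const
  have hTRbound : ∀ f : ↥Ω, ∀ t ∈ Icc t₀ (t₀ + a), ‖TR f t‖ ≤ R := by
    intro f t ht
    have h1 : ‖Sc (t - t₀) ξ₀‖ ≤ ζ₁ * ‖ξ₀‖ := by
      calc ‖Sc (t - t₀) ξ₀‖ ≤ ‖Sc (t - t₀)‖ * ‖ξ₀‖ := ContinuousLinearMap.le_opNorm _ _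
        _ ≤ ζ₁ * ‖ξ₀‖ := mul_le_mul_of_nonneg_right (hScle _) (norm_nonneg _)
    have hgb : ‖g (ext f.1)‖ ≤ ζ₃ := hgle _ (hextP f)
    have h2 : ‖Sc (t - t₀) (g (ext f.1))‖ ≤ ζ₁ * ζ₃ := by
      calc ‖Sc (t - t₀) (g (ext f.1))‖ ≤ ‖Sc (t - t₀)‖ * ‖g (ext f.1)‖ :=
            ContinuousLinearMap.le_opNorm _ _
        _ ≤ ζ₁ * ζ₃ := by
            have hn1 := norm_nonneg (Sc (t - t₀))
            have hn2 := hScle (t - t₀)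
            have hn3 := norm_nonneg (g (ext f.1))
            nlinarith
    have h3 := hFbound f t ht
    have h4 : ‖TR f t‖ ≤ ζ₁ * ‖ξ₀‖ + ζ₁ * ζ₃ + a * (ζ₁ * (δ * R + ζ₂)) := by
      rw [hTRdef]
      calc ‖Sc (t - t₀) ξ₀ - Sc (t - t₀) (g (ext f.1)) + Fint f t‖
          ≤ ‖Sc (t - t₀) ξ₀ - Sc (t - t₀) (g (ext f.1))‖ + ‖Fint f t‖ := norm_add_le _ _
        _ ≤ (‖Sc (t - t₀) ξ₀‖ + ‖Sc (t - t₀) (g (ext f.1))‖) + ‖Fint f t‖ := by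
            have := norm_sub_le (Sc (t - t₀) ξ₀) (Sc (t - t₀) (g (ext f.1)))
            linarith
        _ ≤ ζ₁ * ‖ξ₀‖ + ζ₁ * ζ₃ + a * (ζ₁ * (δ * R + ζ₂)) := by linarith
    -- use b ≤ 1 : a*δ*R ≤ a*δ*R/b
    have h5 : a * δ * R ≤ a * δ * R / b := by
      rw [le_div_iff₀ hb]
      nlinarith [mul_nonneg (mul_nonneg ha.le hδ.le) hR.le]
    have h6 : ζ₁ * (a * δ * R) ≤ ζ₁ * (a * δ * R / b) := mul_le_mul_of_nonneg_left h5 hζ₁0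
    have e1 : a * (ζ₁ * (δ * R + ζ₂)) = ζ₁ * (a * δ * R) + a * (ζ₁ * ζ₂) := by ring
    have e2 : ζ₁ * (‖ξ₀‖ + ζ₃ + a * δ * R / b + a * ζ₂)
        = ζ₁ * ‖ξ₀‖ + ζ₁ * ζ₃ + ζ₁ * (a * δ * R / b) + a * (ζ₁ * ζ₂) := by ring
    linarith
  -- the operator T : Ω → Ω
  set T : ↥Ω → ↥Ω := fun f =>
    ⟨⟨fun t => TR f t.1, (hTRcont f).comp continuous_subtype_val⟩,
      fun t => hTRbound f t.1 t.2⟩ with hTdef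
  -- contraction constant
  set c : ℝ := ζ₁ * lam + ζ₁ * δ * a with hcdef
  have hc0 : 0 ≤ c := by
    rw [hcdef]
    have h1 : 0 ≤ ζ₁ * lam := mul_nonneg hζ₁0 hlam0
    have h2 : 0 ≤ ζ₁ * δ * a := by positivity
    linarith
  have hc1 : c < 1 := by
    rw [hcdef]
    have h5 : ζ₁ * δ * a ≤ ζ₁ * δ * a / b := by
      rw [le_div_iff₀ hb]
      nlinarith [mul_nonneg (mul_nonneg hζ₁0 hδ.le) ha.le]
    linarith
  have hlip : ∀ f₁ f₂ : ↥Ω, dist (T f₁) (T f₂) ≤ c * dist f₁ f₂ := by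
    intro f₁ f₂
    rw [Subtype.dist_eq]
    refine ContinuousMap.dist_le_iff_of_nonempty.2 ?_
    intro t
    have hD0 : (0:ℝ) ≤ dist f₁ f₂ := dist_nonneg
    -- pointwise estimate
    have hgd : ‖g (ext f₁.1) - g (ext f₂.1)‖ ≤ lam * dist f₁ f₂ := by
      have h := hg (ext f₁.1) (ext f₂.1) (hextP f₁) (hextP f₂)
      have hsup : (⨆ s : Icc t₀ (t₀ + a), ‖ext f₁.1 s.1 - ext f₂.1 s.1‖)
          ≤ dist f₁ f₂ := by
        refine ciSup_le fun s => ?_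
        rw [hexteq f₁.1 s.1 s.2, hexteq f₂.1 s.1 s.2, ← dist_eq_norm]
        calc dist (f₁.1 ⟨s.1, s.2⟩) (f₂.1 ⟨s.1, s.2⟩)
            ≤ dist f₁.1 f₂.1 := ContinuousMap.dist_apply_le_dist _
          _ = dist f₁ f₂ := (Subtype.dist_eq f₁ f₂).symm
      calc ‖g (ext f₁.1) - g (ext f₂.1)‖
          ≤ lam * (⨆ s : Icc t₀ (t₀ + a), ‖ext f₁.1 s.1 - ext f₂.1 s.1‖) := h
        _ ≤ lam * dist f₁ f₂ := mul_le_mul_of_nonneg_left hsup hlam0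
    have hSd : ‖Sc (t.1 - t₀) (g (ext f₁.1)) - Sc (t.1 - t₀) (g (ext f₂.1))‖
        ≤ ζ₁ * (lam * dist f₁ f₂) := by
      rw [← ContinuousLinearMap.map_sub]
      calc ‖Sc (t.1 - t₀) (g (ext f₁.1) - g (ext f₂.1))‖
          ≤ ‖Sc (t.1 - t₀)‖ * ‖g (ext f₁.1) - g (ext f₂.1)‖ :=
            ContinuousLinearMap.le_opNorm _ _
        _ ≤ ζ₁ * (lam * dist f₁ f₂) := by
            have hb1 := hScle (t.1 - t₀)
            have h0 : (0:ℝ) ≤ lam * dist f₁ f₂ := mul_nonneg hlam0 hD0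
            nlinarith [norm_nonneg (Sc (t.1 - t₀)),
              norm_nonneg (g (ext f₁.1) - g (ext f₂.1))]
    have hFd := hFdist f₁ f₂ t.1 t.2
    rw [dist_eq_norm]
    have hval : (T f₁).1 t - (T f₂).1 t
        = (Sc (t.1 - t₀) (g (ext f₂.1)) - Sc (t.1 - t₀) (g (ext f₁.1)))
          + (Fint f₁ t.1 - Fint f₂ t.1) := by
      show TR f₁ t.1 - TR f₂ t.1 = _
      rw [hTRdef]
      show (Sc (t.1 - t₀) ξ₀ - Sc (t.1 - t₀) (g (ext f₁.1)) + Fint f₁ t.1)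
        - (Sc (t.1 - t₀) ξ₀ - Sc (t.1 - t₀) (g (ext f₂.1)) + Fint f₂ t.1) = _
      abel
    rw [hval]
    calc ‖(Sc (t.1 - t₀) (g (ext f₂.1)) - Sc (t.1 - t₀) (g (ext f₁.1)))
          + (Fint f₁ t.1 - Fint f₂ t.1)‖
        ≤ ‖Sc (t.1 - t₀) (g (ext f₂.1)) - Sc (t.1 - t₀) (g (ext f₁.1))‖
          + ‖Fint f₁ t.1 - Fint f₂ t.1‖ := norm_add_le _ _
      _ ≤ ζ₁ * (lam * dist f₁ f₂) + ζ₁ * δ * a * dist f₁ f₂ := by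
          rw [norm_sub_rev] at hSd
          linarith
      _ = c * dist f₁ f₂ := by rw [hcdef]; ring
  have hcontracting : ContractingWith ⟨c, hc0⟩ T := by
    constructor
    · exact_mod_cast hc1
    · exact LipschitzWith.of_dist_le_mul fun f₁ f₂ => hlip f₁ f₂
  set xiF : ↥Ω := ContractingWith.fixedPoint T hcontracting with hxiFdef
  have hfix : T xiF = xiF := hcontracting.fixedPoint_isFixedPt
  -- the solution
  refine ⟨ext xiF.1, hextP xiF, ?_, ?_⟩
  · -- ξ satisfies the integral equation
    intro t ht
    have h1 : ext xiF.1 t = xiF.1 ⟨t, ht⟩ := hexteq _ t ht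
    have h2 : xiF.1 ⟨t, ht⟩ = TR xiF t := by
      conv_lhs => rw [← hfix]
      rfl
    have htmem : t - t₀ ∈ Icc (0:ℝ) a := ⟨by linarith [ht.1], by linarith [ht.2]⟩
    have hinteq : Fint xiF t = ∫ s in t₀..t, K (t - s) (φ s (ext xiF.1 (σ s))) := by
      rw [hFintdef]
      refine intervalIntegral.integral_congr ?_
      intro s hs
      rw [uIcc_of_le ht.1] at hs
      have hsI : s ∈ Icc t₀ (t₀ + a) := ⟨hs.1, le_trans hs.2 ht.2⟩
      have htsmem : t - s ∈ Icc (0:ℝ) a := ⟨by linarith [hs.2], by linarith [hsI.1, ht.2]⟩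
      show Kc (t - s) (φc s (ext xiF.1 (σc s))) = K (t - s) (φ s (ext xiF.1 (σ s)))
      rw [hKceq _ htsmem, hφcdef]
      simp only []
      rw [hπeq s hsI, hσceq s hsI]
    rw [h1, h2, hTRdef]
    simp only []
    rw [hSceq _ htmem, hinteq]
  · -- uniqueness
    intro ξ' hmem' heq'
    set f' : C(↥(Icc t₀ (t₀ + a)), Λ) := ⟨fun t => ξ' t.1, hmem'.1.restrict⟩ with hf'def
    have hf'Ω : f' ∈ Ω := fun t => hmem'.2 t.1 t.2
    have hextf' : ∀ s ∈ Icc t₀ (t₀ + a), ext f' s = ξ' s := by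
      intro s hs
      rw [hexteq f' s hs]
      rfl
    have hgf' : g (ext f') = g ξ' := by
      refine hgcongr (ext f') ξ' (hextP ⟨f', hf'Ω⟩) hmem' hextf'
    have hfixf' : T ⟨f', hf'Ω⟩ = ⟨f', hf'Ω⟩ := by
      refine Subtype.ext (ContinuousMap.ext fun t => ?_)
      show TR ⟨f', hf'Ω⟩ t.1 = f' t
      have htmem : t.1 - t₀ ∈ Icc (0:ℝ) a := ⟨by linarith [t.2.1], by linarith [t.2.2]⟩
      have hinteq : Fint ⟨f', hf'Ω⟩ t.1 = ∫ s in t₀..t.1, K (t.1 - s) (φ s (ξ' (σ s))) := by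
        rw [hFintdef]
        refine intervalIntegral.integral_congr ?_
        intro s hs
        rw [uIcc_of_le t.2.1] at hs
        have hsI : s ∈ Icc t₀ (t₀ + a) := ⟨hs.1, le_trans hs.2 t.2.2⟩
        have htsmem : t.1 - s ∈ Icc (0:ℝ) a := ⟨by linarith [hs.2], by linarith [hsI.1, t.2.2]⟩
        show Kc (t.1 - s) (φc s (ext f' (σc s))) = K (t.1 - s) (φ s (ξ' (σ s)))
        rw [hKceq _ htsmem, hφcdef]
        simp only []
        rw [hπeq s hsI, hσceq s hsI, hextf' (σ s) (hσmaps s hsI)]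
      have hfval : f' t = ξ' t.1 := rfl
      rw [hTRdef]
      simp only []
      rw [hSceq _ htmem, hgf', hinteq, hfval, ← heq' t.1 t.2]
    have huniq : (⟨f', hf'Ω⟩ : ↥Ω) = xiF :=
      hcontracting.fixedPoint_unique hfixf'
    intro t ht
    have h1 : ξ' t = f' ⟨t, ht⟩ := rfl
    have h2 : ext xiF.1 t = xiF.1 ⟨t, ht⟩ := hexteq _ t ht
    rw [h1, h2, ← huniq]
end

section
/- Let α ∈ (0, 1), t₀ ∈ ℝ, a > 0 and I = [t₀, t₀ + a]. Define the Mittag-Leffler function E_α(z) := ∑_{k=0}^{∞} z^k / Γ(αk + 1) for z ≥ 0, where Γ is the real Gamma function. Let u : I → ℝ be continuous and nonnegative, and let θ ≥ 0 and C ≥ 0 be constants such that u(t) ≤ θ + C ∫_{t₀}^{t} (t − s)^{α−1} u(s) ds for all t ∈ I. Then u(t) ≤ θ · E_α(C Γ(α) (t − t₀)^α) for all t ∈ I. -/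
open MeasureTheory Set Real Filter

lemma real_beta {p q : ℝ} (hp : 0 < p) (hq : 0 < q) :
    ∫ x in (0:ℝ)..1, x ^ (p-1) * (1-x) ^ (q-1)
      = Real.Gamma p * Real.Gamma q / Real.Gamma (p+q) := by
  have h := Complex.Gamma_mul_Gamma_eq_betaIntegral (s := (p:ℂ)) (t := (q:ℂ))
    (by simpa using hp) (by simpa using hq)
  have hb : Complex.betaIntegral p q
      = ((∫ x in (0:ℝ)..1, x ^ (p-1) * (1-x)^(q-1) : ℝ) : ℂ) := by
    rw [Complex.betaIntegral, ← intervalIntegral.integral_ofReal]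
    refine intervalIntegral.integral_congr fun x hx => ?_
    rw [uIcc_of_le zero_le_one] at hx
    push_cast
    rw [Complex.ofReal_cpow hx.1 (p-1), Complex.ofReal_cpow (by linarith [hx.2]) (q-1)]
    push_cast
    ring
  rw [hb, ← Complex.ofReal_add, Complex.Gamma_ofReal, Complex.Gamma_ofReal,
    Complex.Gamma_ofReal, ← Complex.ofReal_mul, ← Complex.ofReal_mul,
    Complex.ofReal_inj] at h
  have hpq : Real.Gamma (p+q) ≠ 0 := (Real.Gamma_pos_of_pos (by linarith)).ne'
  field_simp [hpq] at h ⊢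
  linarith [h]

lemma beta_conv {p c x y : ℝ} (hp : 0 < p) (hc : 0 ≤ c) (hxy : x ≤ y) :
    ∫ s in x..y, (y-s) ^ (p-1) * (s-x) ^ c
      = Real.Gamma p * Real.Gamma (c+1) / Real.Gamma (p+c+1) * (y-x) ^ (p+c) := by
  rcases eq_or_lt_of_le hxy with rfl | hlt
  · simp [Real.zero_rpow (by positivity : p + c ≠ 0)]
  have hL : (0:ℝ) < y - x := sub_pos.2 hlt
  have key := intervalIntegral.integral_comp_mul_add (a := (0:ℝ)) (b := 1)
    (f := fun s => (y-s) ^ (p-1) * (s-x) ^ c) hL.ne' x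
  simp only [mul_zero, zero_add, mul_one, sub_add_cancel] at key
  have hcong : (∫ τ in (0:ℝ)..1, (y - ((y-x) * τ + x)) ^ (p-1) * ((y-x) * τ + x - x) ^ c)
      = (y-x) ^ (p-1) * (y-x) ^ c * ∫ τ in (0:ℝ)..1, τ ^ c * (1-τ) ^ (p-1) := by
    rw [← intervalIntegral.integral_const_mul]
    refine intervalIntegral.integral_congr fun τ hτ => ?_
    rw [uIcc_of_le zero_le_one] at hτ
    have h1 : y - ((y-x) * τ + x) = (y-x) * (1-τ) := by ring
    have h2 : (y-x) * τ + x - x = (y-x) * τ := by ring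
    rw [h1, h2, Real.mul_rpow hL.le (by linarith [hτ.2]), Real.mul_rpow hL.le hτ.1]
    ring
  have hbeta : (∫ τ in (0:ℝ)..1, τ ^ c * (1-τ) ^ (p-1))
      = Real.Gamma (c+1) * Real.Gamma p / Real.Gamma (c+1+p) := by
    have := real_beta (p := c+1) (q := p) (by linarith) hp
    simpa using this
  rw [hcong, hbeta, smul_eq_mul, eq_inv_mul_iff_mul_eq₀ hL.ne'] at key
  rw [← key]
  have hpow : (y-x) * ((y-x) ^ (p-1) * (y-x) ^ c) = (y-x) ^ (p+c) := by
    nth_rewrite 1 [← Real.rpow_one (y-x)]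
    rw [← Real.rpow_add hL, ← Real.rpow_add hL]
    ring_nf
  have harg : c + 1 + p = p + c + 1 := by ring
  rw [harg, ← mul_assoc, hpow]
  ring

lemma gamma_step {α : ℝ} (hα : α ∈ Set.Ioo (0:ℝ) 1) {x : ℝ} (hx : 1 ≤ x) :
    x * Real.Gamma x ≤ Real.Gamma (x + α) * (x + α) ^ (1 - α) := by
  obtain ⟨hα0, hα1⟩ := hα
  have hx0 : (0:ℝ) < x := by linarith
  have h1 : (0:ℝ) < x + α := by linarith
  have h2 : (0:ℝ) < x + α + 1 := by linarith
  have hconv := Real.convexOn_log_Gamma.2 (Set.mem_Ioi.2 h1) (Set.mem_Ioi.2 h2)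
    hα0.le (by linarith : (0:ℝ) ≤ 1 - α) (by ring)
  have harg : α • (x + α) + (1 - α) • (x + α + 1) = x + 1 := by
    simp [smul_eq_mul]; ring
  rw [harg] at hconv
  simp only [Function.comp_apply, smul_eq_mul] at hconv
  have hG1 : Real.Gamma (x + α + 1) = (x + α) * Real.Gamma (x + α) :=
    Real.Gamma_add_one h1.ne'
  have hGpos : (0:ℝ) < Real.Gamma (x + α) := Real.Gamma_pos_of_pos h1
  rw [hG1, Real.log_mul h1.ne' hGpos.ne'] at hconv
  -- hconv : log Γ(x+1) ≤ α * log Γ(x+α) + (1-α) * (log (x+α) + log Γ(x+α))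
  have hconv' : Real.log (Real.Gamma (x+1))
      ≤ Real.log (Real.Gamma (x + α)) + (1 - α) * Real.log (x + α) := by nlinarith [hconv]
  have hGx1 : (0:ℝ) < Real.Gamma (x + 1) := Real.Gamma_pos_of_pos (by linarith)
  have := Real.exp_le_exp.2 hconv'
  rw [Real.exp_log hGx1, Real.exp_add, Real.exp_log hGpos] at this
  rw [Real.Gamma_add_one hx0.ne'] at this
  calc x * Real.Gamma x ≤ Real.Gamma (x+α) * Real.exp ((1-α) * Real.log (x+α)) := this
    _ = Real.Gamma (x+α) * (x+α) ^ (1-α) := by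
        rw [Real.rpow_def_of_pos h1, mul_comm (Real.log (x+α))]

lemma ml_summable {α : ℝ} (hα : α ∈ Set.Ioo (0:ℝ) 1) {z : ℝ} (hz : 0 ≤ z) :
    Summable (fun k : ℕ => z ^ k / Real.Gamma (α * k + 1)) := by
  obtain ⟨hα0, hα1⟩ := hα
  apply summable_of_ratio_norm_eventually_le (r := 1/2) (by norm_num)
  have htend : Tendsto (fun n : ℕ => z * 2 ^ (1-α) * (α * n + 1) ^ (-α)) atTop (nhds 0) := by
    have t1 : Tendsto (fun n : ℕ => α * (n:ℝ) + 1) atTop atTop :=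
      tendsto_atTop_add_const_right _ 1
        ((tendsto_natCast_atTop_atTop).const_mul_atTop hα0)
    have t2 := (tendsto_rpow_neg_atTop hα0).comp t1
    have := t2.const_mul (z * 2 ^ (1-α))
    simpa using this
  have hev : ∀ᶠ n : ℕ in atTop, z * 2 ^ (1-α) * (α * n + 1) ^ (-α) ≤ 1/2 :=
    htend.eventually_le_const (by norm_num)
  filter_upwards [hev] with n hn
  set x : ℝ := α * n + 1 with hxdef
  have hx1 : (1:ℝ) ≤ x := by
    have : (0:ℝ) ≤ α * n := by positivity
    simp [hxdef]; linarith
  have hx0 : (0:ℝ) < x := by linarith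
  have hxα : (0:ℝ) < x + α := by linarith
  have hGx : (0:ℝ) < Real.Gamma x := Real.Gamma_pos_of_pos hx0
  have hGxα : (0:ℝ) < Real.Gamma (x + α) := Real.Gamma_pos_of_pos hxα
  have hstep := gamma_step ⟨hα0, hα1⟩ hx1
  -- (x+α)^(1-α) ≤ 2^(1-α) * x^(1-α)
  have hb : (x + α) ^ (1-α) ≤ 2 ^ (1-α) * x ^ (1-α) := by
    rw [← Real.mul_rpow (by norm_num) hx0.le]
    exact Real.rpow_le_rpow hxα.le (by linarith) (by linarith)
  have hxpow : x ^ (1-α) = x ^ (-α) * x := by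
    have h : (1-α) = -α + 1 := by ring
    rw [h, Real.rpow_add hx0, Real.rpow_one]
  -- key scalar inequality : z * Γ x ≤ 1/2 * Γ (x+α)
  have hkey : z * Real.Gamma x ≤ 1/2 * Real.Gamma (x + α) := by
    have h1 : z * (x * Real.Gamma x) ≤ z * (Real.Gamma (x+α) * (x+α)^(1-α)) :=
      mul_le_mul_of_nonneg_left hstep hz
    have h2 : z * (Real.Gamma (x+α) * (x+α)^(1-α))
        ≤ z * (Real.Gamma (x+α) * (2^(1-α) * x^(1-α))) := by
      have := mul_le_mul_of_nonneg_left hb hGxα.le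
      nlinarith [this, hz]
    have h3 : z * (Real.Gamma (x+α) * (2^(1-α) * x^(1-α)))
        = (z * 2^(1-α) * x^(-α)) * Real.Gamma (x+α) * x := by
      rw [hxpow]; ring
    have h4 : (z * 2^(1-α) * x^(-α)) * Real.Gamma (x+α) * x
        ≤ (1/2) * Real.Gamma (x+α) * x := by
      have hprod : (0:ℝ) ≤ Real.Gamma (x+α) * x := by positivity
      nlinarith [mul_le_mul_of_nonneg_right hn hprod]
    have := (h1.trans h2).trans (le_of_eq h3 |>.trans h4)
    -- this : z * (x * Γ x) ≤ 1/2 * Γ(x+α) * x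
    nlinarith [this, hx0]
  -- conclude the ratio bound
  have hGarg : Real.Gamma (α * ((n:ℝ)+1) + 1) = Real.Gamma (x + α) := by
    congr 1; simp [hxdef]; ring
  have hzn : (0:ℝ) ≤ z ^ n := by positivity
  rw [Real.norm_eq_abs, Real.norm_eq_abs, abs_of_nonneg (by positivity),
    abs_of_nonneg (by positivity)]
  push_cast
  rw [hGarg, pow_succ, div_le_iff₀ hGxα]
  have h5 : z ^ n * z ≤ z ^ n * (1/2 * Real.Gamma (x+α)) / Real.Gamma x := by
    rw [le_div_iff₀ hGx]
    calc z ^ n * z * Real.Gamma x = z ^ n * (z * Real.Gamma x) := by ring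
      _ ≤ z ^ n * (1/2 * Real.Gamma (x+α)) := mul_le_mul_of_nonneg_left hkey hzn
  have h6 : z ^ n * (1/2 * Real.Gamma (x+α)) / Real.Gamma x
      = 1/2 * (z ^ n / Real.Gamma x) * Real.Gamma (x+α) := by
    field_simp
  linarith [h5, h6.symm.le]

/-- Fractional (singular-kernel) Gronwall inequality: if `u` is continuous and nonnegative
on `I = [t₀, t₀+a]` and `u(t) ≤ θ + C ∫_{t₀}^{t} (t−s)^{α−1} u(s) ds` on `I`, then
`u(t) ≤ θ · E_α(C Γ(α) (t−t₀)^α)`, where `E_α(z) = ∑_{k} z^k / Γ(αk+1)`. -/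
theorem fractional_gronwall
    (α : ℝ) (hα : α ∈ Set.Ioo (0 : ℝ) 1)
    (t₀ a : ℝ) (ha : 0 < a)
    (u : ℝ → ℝ) (hu : ContinuousOn u (Set.Icc t₀ (t₀ + a)))
    (hu0 : ∀ t ∈ Set.Icc t₀ (t₀ + a), 0 ≤ u t)
    (θ C : ℝ) (hθ : 0 ≤ θ) (hC : 0 ≤ C)
    (hineq : ∀ t ∈ Set.Icc t₀ (t₀ + a),
      u t ≤ θ + C * ∫ s in t₀..t, (t - s) ^ (α - 1) * u s) :
    ∀ t ∈ Set.Icc t₀ (t₀ + a),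
      u t ≤ θ * ∑' k : ℕ,
        (C * Real.Gamma α * (t - t₀) ^ α) ^ k / Real.Gamma (α * k + 1) := by
  obtain ⟨hα0, hα1⟩ := hα
  have hΓα : 0 < Real.Gamma α := Real.Gamma_pos_of_pos hα0
  obtain ⟨M₀, hM₀⟩ := isCompact_Icc.exists_bound_of_continuousOn hu
  set M : ℝ := max M₀ 0 with hMdef
  have hM : ∀ s ∈ Set.Icc t₀ (t₀+a), u s ≤ M := by
    intro s hs
    calc u s ≤ |u s| := le_abs_self _
      _ = ‖u s‖ := rfl
      _ ≤ M₀ := hM₀ s hs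
      _ ≤ M := le_max_left _ _
  have hM0 : (0:ℝ) ≤ M := le_max_right _ _
  have hker : ∀ t ∈ Set.Icc t₀ (t₀+a),
      IntervalIntegrable (fun s => (t-s)^(α-1)) volume t₀ t := by
    intro t ht
    have h := (intervalIntegral.intervalIntegrable_rpow' (show (-1:ℝ) < α-1 by linarith)
      (a := 0) (b := t - t₀)).comp_sub_left t
    simpa using h.symm
  have hcont : ∀ c : ℝ, 0 ≤ c → Continuous (fun s : ℝ => (s - t₀) ^ c) := by
    intro c hc
    exact (continuous_id.sub continuous_const).rpow_const (fun s => Or.inr hc)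
  -- key induction
  have key : ∀ n : ℕ, ∀ t ∈ Set.Icc t₀ (t₀+a),
      u t ≤ θ * ∑ k ∈ Finset.range n,
          (C*Real.Gamma α)^k * (t-t₀)^(α*k) / Real.Gamma (α*k+1)
        + M * ((C*Real.Gamma α)^n * (t-t₀)^(α*n) / Real.Gamma (α*n+1)) := by
    intro n
    induction n with
    | zero =>
      intro t ht
      simpa [Real.Gamma_one] using hM t ht
    | succ n IH =>
      intro t ht
      obtain ⟨ht1, ht2⟩ := ht
      have htt : (0:ℝ) ≤ t - t₀ := by linarith
      set G : ℝ → ℝ := fun s => ∑ k ∈ Finset.range (n+1),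
        ((if k = n then M else θ) * (C*Real.Gamma α)^k / Real.Gamma (α*k+1)) * (s-t₀)^(α*k)
        with hGdef
      have hG : ∀ s ∈ Set.Icc t₀ (t₀+a), u s ≤ G s := by
        intro s hs
        refine (IH s hs).trans (le_of_eq ?_)
        rw [hGdef]
        simp only
        rw [Finset.sum_range_succ, if_pos rfl, Finset.mul_sum]
        congr 1
        · refine Finset.sum_congr rfl fun k hk => ?_
          rw [if_neg (Finset.mem_range.1 hk).ne]
          ring
        · ring
      have hGcont : Continuous G := by
        rw [hGdef]
        exact continuous_finset_sum _ fun k _ =>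
          continuous_const.mul (hcont (α*k) (by positivity))
      have huIcc : Set.uIcc t₀ t ⊆ Set.Icc t₀ (t₀+a) := by
        rw [uIcc_of_le ht1]; exact Icc_subset_Icc le_rfl ht2
      have hint_u : IntervalIntegrable (fun s => (t-s)^(α-1) * u s) volume t₀ t :=
        (hker t ⟨ht1, ht2⟩).mul_continuousOn (hu.mono huIcc)
      have hint_G : IntervalIntegrable (fun s => (t-s)^(α-1) * G s) volume t₀ t :=
        (hker t ⟨ht1, ht2⟩).mul_continuousOn hGcont.continuousOn
      have hmono : (∫ s in t₀..t, (t-s)^(α-1) * u s) ≤ ∫ s in t₀..t, (t-s)^(α-1) * G s := by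
        apply intervalIntegral.integral_mono_on ht1 hint_u hint_G
        intro s hs
        have hk0 : (0:ℝ) ≤ (t-s)^(α-1) := Real.rpow_nonneg (by linarith [hs.2]) _
        exact mul_le_mul_of_nonneg_left (hG s ⟨hs.1, le_trans hs.2 ht2⟩) hk0
      have hintk : ∀ k : ℕ,
          IntervalIntegrable (fun s => (t-s)^(α-1) * (s-t₀)^(α*k)) volume t₀ t :=
        fun k => (hker t ⟨ht1, ht2⟩).mul_continuousOn
          (hcont (α*k) (by positivity)).continuousOn
      have hIval : ∀ k : ℕ, (∫ s in t₀..t, (t-s)^(α-1) * (s-t₀)^(α*k))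
          = Real.Gamma α * Real.Gamma (α*k+1) / Real.Gamma (α+α*k+1) * (t-t₀)^(α+α*k) :=
        fun k => beta_conv hα0 (by positivity) ht1
      have hGint : (∫ s in t₀..t, (t-s)^(α-1) * G s)
          = ∑ k ∈ Finset.range (n+1),
            ((if k = n then M else θ) * (C*Real.Gamma α)^k / Real.Gamma (α*k+1)) *
              (Real.Gamma α * Real.Gamma (α*k+1) / Real.Gamma (α+α*k+1) * (t-t₀)^(α+α*k)) := by
        have hfe : (fun s => (t-s)^(α-1) * G s) = fun s => ∑ k ∈ Finset.range (n+1),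
            ((if k = n then M else θ) * (C*Real.Gamma α)^k / Real.Gamma (α*k+1)) *
              ((t-s)^(α-1) * (s-t₀)^(α*k)) := by
          funext s
          rw [hGdef]
          simp only
          rw [Finset.mul_sum]
          exact Finset.sum_congr rfl fun k _ => by ring
        rw [hfe, intervalIntegral.integral_finset_sum]
        · exact Finset.sum_congr rfl fun k _ => by
            rw [intervalIntegral.integral_const_mul, hIval k]
        · intro k _
          exact (hintk k).const_mul _
      have h2 : u t ≤ θ + C * ∑ k ∈ Finset.range (n+1),
            ((if k = n then M else θ) * (C*Real.Gamma α)^k / Real.Gamma (α*k+1)) *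
              (Real.Gamma α * Real.Gamma (α*k+1) / Real.Gamma (α+α*k+1) * (t-t₀)^(α+α*k)) := by
        calc u t ≤ θ + C * ∫ s in t₀..t, (t-s)^(α-1) * u s := hineq t ⟨ht1, ht2⟩
          _ ≤ θ + C * ∫ s in t₀..t, (t-s)^(α-1) * G s := by
              exact add_le_add_right (mul_le_mul_of_nonneg_left hmono hC) θ
          _ = _ := by rw [hGint]
      refine h2.trans (le_of_eq ?_)
      have hterm : ∀ k : ℕ, C * (((if k = n then M else θ) * (C*Real.Gamma α)^k / Real.Gamma (α*k+1)) *
            (Real.Gamma α * Real.Gamma (α*k+1) / Real.Gamma (α+α*k+1) * (t-t₀)^(α+α*k)))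
          = (if k = n then M else θ) *
            ((C*Real.Gamma α)^(k+1) * (t-t₀)^(α*((k+1:ℕ):ℝ)) / Real.Gamma (α*((k+1:ℕ):ℝ)+1)) := by
        intro k
        have he1 : α*(((k+1:ℕ)):ℝ) = α + α*k := by push_cast; ring
        have hG1 : Real.Gamma (α*k+1) ≠ 0 := (Real.Gamma_pos_of_pos (by positivity)).ne'
        have hG2 : Real.Gamma (α+α*k+1) ≠ 0 := (Real.Gamma_pos_of_pos (by positivity)).ne'
        rw [he1]
        field_simp
        ring
      rw [Finset.mul_sum]
      have hL : ∑ k ∈ Finset.range (n+1), C * (((if k = n then M else θ) * (C*Real.Gamma α)^k / Real.Gamma (α*k+1)) *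
            (Real.Gamma α * Real.Gamma (α*k+1) / Real.Gamma (α+α*k+1) * (t-t₀)^(α+α*k)))
          = (∑ k ∈ Finset.range n, θ *
            ((C*Real.Gamma α)^(k+1) * (t-t₀)^(α*((k+1:ℕ):ℝ)) / Real.Gamma (α*((k+1:ℕ):ℝ)+1)))
            + M * ((C*Real.Gamma α)^(n+1) * (t-t₀)^(α*((n+1:ℕ):ℝ)) / Real.Gamma (α*((n+1:ℕ):ℝ)+1)) := by
        rw [Finset.sum_congr rfl fun k _ => hterm k, Finset.sum_range_succ, if_pos rfl]
        congr 1
        refine Finset.sum_congr rfl fun k hk => ?_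
        rw [if_neg (Finset.mem_range.1 hk).ne]
      rw [hL]
      rw [Finset.sum_range_succ'
        (fun k => (C*Real.Gamma α)^k * (t-t₀)^(α*(k:ℝ)) / Real.Gamma (α*(k:ℝ)+1)) n]
      have hf0 : (C*Real.Gamma α)^0 * (t-t₀)^(α*((0:ℕ):ℝ)) / Real.Gamma (α*((0:ℕ):ℝ)+1) = 1 := by
        simp [Real.Gamma_one]
      rw [hf0, mul_add, mul_one, Finset.mul_sum]
      ring
  -- limit step
  intro t ht
  obtain ⟨ht1, ht2⟩ := ht
  have htt : (0:ℝ) ≤ t - t₀ := by linarith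
  set z : ℝ := C * Real.Gamma α * (t-t₀)^α with hzdef
  have hz0 : (0:ℝ) ≤ z := by positivity
  have hsummable : Summable (fun k : ℕ => z^k / Real.Gamma (α*k+1)) :=
    ml_summable ⟨hα0, hα1⟩ hz0
  have hzk : ∀ k : ℕ, (C*Real.Gamma α)^k * (t-t₀)^(α*(k:ℝ)) = z^k := by
    intro k
    rw [hzdef, Real.rpow_mul htt, Real.rpow_natCast, ← mul_pow]
  have hterm2 : ∀ n : ℕ, u t ≤ θ * ∑ k ∈ Finset.range n, z^k / Real.Gamma (α*k+1)
      + M * (z^n / Real.Gamma (α*n+1)) := by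
    intro n
    have := key n t ⟨ht1, ht2⟩
    calc u t ≤ _ := this
      _ = θ * ∑ k ∈ Finset.range n, z^k / Real.Gamma (α*k+1)
          + M * (z^n / Real.Gamma (α*n+1)) := by
        rw [hzk n]
        congr 1
        rw [Finset.sum_congr rfl fun k _ => by rw [hzk k]]
  have hnonneg : ∀ k : ℕ, (0:ℝ) ≤ z^k / Real.Gamma (α*k+1) := by
    intro k
    have := Real.Gamma_pos_of_pos (show (0:ℝ) < α*k+1 by positivity)
    positivity
  have hpartial : ∀ n : ℕ, θ * ∑ k ∈ Finset.range n, z^k / Real.Gamma (α*k+1)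
      ≤ θ * ∑' k : ℕ, z^k / Real.Gamma (α*k+1) := by
    intro n
    exact mul_le_mul_of_nonneg_left
      (Summable.sum_le_tsum _ (fun k _ => hnonneg k) hsummable) hθ
  have htail : Tendsto (fun n : ℕ => θ * (∑' k : ℕ, z^k / Real.Gamma (α*k+1))
      + M * (z^n / Real.Gamma (α*n+1))) atTop
      (nhds (θ * (∑' k : ℕ, z^k / Real.Gamma (α*k+1)))) := by
    have h0 := hsummable.tendsto_atTop_zero
    have := (h0.const_mul M).const_add (θ * (∑' k : ℕ, z^k / Real.Gamma (α*k+1)))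
    simpa using this
  have hfin : u t ≤ θ * ∑' k : ℕ, z^k / Real.Gamma (α*k+1) := by
    refine ge_of_tendsto' htail fun n => ?_
    calc u t ≤ _ := hterm2 n
      _ ≤ _ := add_le_add_left (hpartial n) _
  exact hfin
end
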